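/- arXiv:1007.4236 — 6 statements merged into one kernel-verified Lean document; each statement's English description precedes it below -/
import Mathlib

section
/- Let 2 ≤ k ≤ n and let T be a set of k − 1 two-element subsets of {1,…,k} such that the simple graph on {1,…,k} with edge set T is a tree, and T is noncrossing: for all {a_1,a_2}, {b_1,b_2} ∈ T with a_1 < a_2 and b_1 < b_2, if a_1 < b_1 < a_2 then b_2 ≤ a_2. Then there exists an ordering t_{k−1}, …, t_1 of the transpositions corresponding to the edges of T such that t_{k−1} ∘ ⋯ ∘ t_1 equals the cycle (1 2 ⋯ k) (the permutation sending i to i+1 for 1 ≤ i < k, sending k to 1, and fixing all other elements of {1,…,n}). -/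
open List Equiv
open Fin.NatCast

lemma s10_splice1 {α : Type*} [DecidableEq α] (l₁ l₂ : List α) (v w : α)
    (h : (l₁ ++ v :: w :: l₂).Nodup) :
    (l₁ ++ v :: w :: l₂).formPerm = Equiv.swap v w * (l₁ ++ w :: l₂).formPerm := by
  have h2 : (l₁ ++ w :: l₂).Nodup := by
    refine List.Nodup.sublist ?_ h
    exact (List.sublist_cons_self v (w :: l₂)).append_left l₁
  rw [← List.formPerm_rotate _ h l₁.length, ← List.formPerm_rotate _ h2 l₁.length,
    List.rotate_append_length_eq, List.rotate_append_length_eq]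
  simp [List.formPerm_cons_cons]

lemma s10_splice2 {α : Type*} [DecidableEq α] (l₁ l₂ : List α) (u v : α)
    (h : (l₁ ++ u :: v :: l₂).Nodup) :
    (l₁ ++ u :: v :: l₂).formPerm = (l₁ ++ u :: l₂).formPerm * Equiv.swap u v := by
  have h2 : (l₁ ++ u :: l₂).Nodup := by
    refine List.Nodup.sublist ?_ h
    refine List.Sublist.append_left ?_ l₁
    exact List.cons_sublist_cons.2 (List.sublist_cons_self v l₂)
  have e1 : l₁ ++ u :: v :: l₂ = (l₁ ++ [u, v]) ++ l₂ := by simp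
  have e2 : l₁ ++ u :: l₂ = (l₁ ++ [u]) ++ l₂ := by simp
  rw [e1] at h; rw [e2] at h2
  rw [e1, e2, ← List.formPerm_rotate _ h (l₁ ++ [u, v]).length,
    ← List.formPerm_rotate _ h2 (l₁ ++ [u]).length,
    List.rotate_append_length_eq, List.rotate_append_length_eq]
  have e3 : l₂ ++ (l₁ ++ [u, v]) = (l₂ ++ l₁) ++ [u, v] := by simp
  have e4 : l₂ ++ (l₁ ++ [u]) = (l₂ ++ l₁) ++ [u] := by simp
  rw [e3, e4, List.formPerm_append_pair]

lemma s10_sorted_consecutive_decomp {α : Type*} [LinearOrder α] :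
    ∀ (L : List α), L.Pairwise (· < ·) → ∀ a b : α, a ∈ L → b ∈ L → a < b →
      (∀ x ∈ L, ¬(a < x ∧ x < b)) → ∃ l₁ l₂, L = l₁ ++ a :: b :: l₂ := by
  intro L
  induction L with
  | nil => intro _ a b ha; simp at ha
  | cons h t ih =>
    intro hs a b ha hb hab hni
    rw [List.pairwise_cons] at hs
    obtain ⟨hlt, hst⟩ := hs
    by_cases hha : h = a
    · subst hha
      have hbt : b ∈ t := by
        rcases List.mem_cons.1 hb with rfl | hbt
        · exact absurd hab (lt_irrefl _)
        · exact hbt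
      cases t with
      | nil => simp at hbt
      | cons h' t' =>
        have hh' : h < h' := hlt h' List.mem_cons_self
        by_cases hh'b : h' = b
        · exact ⟨[], t', by rw [hh'b]; rfl⟩
        · exfalso
          have hbt' : b ∈ t' := by
            rcases List.mem_cons.1 hbt with rfl | h2
            · exact absurd rfl hh'b
            · exact h2
          have : h' < b := by
            rw [List.pairwise_cons] at hst
            exact hst.1 b hbt'
          exact hni h' (by simp) ⟨hh', this⟩
    · have hat : a ∈ t := by
        rcases List.mem_cons.1 ha with rfl | h2
        · exact absurd rfl hha
        · exact h2
      have hbt : b ∈ t := by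
        rcases List.mem_cons.1 hb with rfl | h2
        · exact absurd (hlt a hat) (not_lt.2 hab.le)
        · exact h2
      obtain ⟨l₁, l₂, rfl⟩ := ih hst a b hat hbt hab (fun x hx => hni x (List.mem_cons_of_mem _ hx))
      exact ⟨h :: l₁, l₂, rfl⟩

lemma s10_decomp_erase_left {α : Type*} [DecidableEq α] (l₁ l₂ : List α) (a b : α)
    (h : (l₁ ++ a :: b :: l₂).Nodup) : (l₁ ++ a :: b :: l₂).erase a = l₁ ++ b :: l₂ := by
  have ha : a ∉ l₁ := by
    intro hmem
    exact (List.disjoint_of_nodup_append h) hmem (by simp)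
  rw [List.erase_append_right _ ha, List.erase_cons_head]

lemma s10_decomp_erase_right {α : Type*} [DecidableEq α] (l₁ l₂ : List α) (a b : α)
    (h : (l₁ ++ a :: b :: l₂).Nodup) : (l₁ ++ a :: b :: l₂).erase b = l₁ ++ a :: l₂ := by
  have hb : b ∉ l₁ := by
    intro hmem
    exact (List.disjoint_of_nodup_append h) hmem (by simp)
  have hba : b ≠ a := by
    intro hba
    subst hba
    have := List.Nodup.of_append_right h
    simp at this
  rw [List.erase_append_right _ hb, List.erase_cons_tail (by simp [Ne.symm hba]), List.erase_cons_head]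

lemma s10_sort_erase {α : Type*} [LinearOrder α] [DecidableEq α] (S : Finset α) (v : α) :
    (S.sort (· ≤ ·)).erase v = (S.erase v).sort (· ≤ ·) := by
  refine (fun h1 h2 h3 => List.Perm.eq_of_pairwise' (r := (· ≤ ·)) h2 h3 h1) ?_ ?_ ?_
  · rw [← Multiset.coe_eq_coe, ← Multiset.coe_erase, Finset.sort_eq, Finset.sort_eq,
      Finset.erase_val]
  · exact (Finset.pairwise_sort _ _).sublist List.erase_sublist
  · exact Finset.pairwise_sort _ _

lemma s10_sort_toFinset_eq {α : Type*} [LinearOrder α] [DecidableEq α] (l : List α)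
    (hn : l.Nodup) (hs : l.Pairwise (· ≤ ·)) : l.toFinset.sort (· ≤ ·) = l := by
  refine (fun h1 h2 h3 => List.Perm.eq_of_pairwise' (r := (· ≤ ·)) h2 h3 h1) ?_ ?_ ?_
  · rw [← Multiset.coe_eq_coe, Finset.sort_eq]
    show (Multiset.ofList l).toFinset.val = _
    rw [Multiset.toFinset_val]
    exact Multiset.dedup_eq_self.2 hn
  · exact Finset.pairwise_sort _ _
  · exact hs
def S10EConn {α : Type*} (F : Finset (Finset α)) (x y : α) : Prop :=
  Relation.ReflTransGen (fun p q => ∃ f ∈ F, p ∈ f ∧ q ∈ f ∧ p ≠ q) x y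

lemma S10EConn.mono {α : Type*} {F F' : Finset (Finset α)} (hFF : F ⊆ F') {x y : α}
    (h : S10EConn F x y) : S10EConn F' x y :=
  Relation.ReflTransGen.mono (r := fun p q => ∃ f ∈ F, p ∈ f ∧ q ∈ f ∧ p ≠ q)
    (p := fun p q => ∃ f ∈ F', p ∈ f ∧ q ∈ f ∧ p ≠ q)
    (fun p q ⟨f, hf, h1, h2, h3⟩ => ⟨f, hFF hf, h1, h2, h3⟩) x y h

lemma s10_forest_bound {α : Type*} [DecidableEq α] :
    ∀ (N : ℕ) (F : Finset (Finset α)) (A : Finset α), F.card ≤ N →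
    (∀ e ∈ F, ∃ a b : α, a ≠ b ∧ e = {a, b} ∧ a ∈ A ∧ b ∈ A) →
    (∀ e ∈ F, ∀ a b : α, e = {a, b} → ¬ S10EConn (F.erase e) a b) →
    A.Nonempty → F.card + 1 ≤ A.card := by
  intro N
  induction N with
  | zero =>
    intro F A hN _ _ hA
    have : F.card = 0 := Nat.le_zero.1 hN
    rw [this]
    exact Nat.one_le_iff_ne_zero.2 (Finset.card_ne_zero_of_mem hA.choose_spec)
  | succ N ih =>
    intro F A hN hrep hbr hA
    classical
    rcases F.eq_empty_or_nonempty with rfl | ⟨e, he⟩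
    · simpa using Finset.card_pos.2 hA
    obtain ⟨x, y, hxy, hexy, hxA, hyA⟩ := hrep e he
    set F' := F.erase e with hF'
    have hF'card : F'.card + 1 = F.card := Finset.card_erase_add_one he
    set C := A.filter (fun z => S10EConn F' x z) with hC
    have hxC : x ∈ C := Finset.mem_filter.2 ⟨hxA, Relation.ReflTransGen.refl⟩
    have hyC : y ∉ C := by
      intro hy
      exact hbr e he x y hexy (Finset.mem_filter.1 hy).2
    -- every edge of F' is within C or within A \ C
    have hsplit : ∀ f ∈ F', f ⊆ C ∨ f ⊆ A \ C := by
      intro f hf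
      obtain ⟨a, b, hab, rfl, haA, hbA⟩ := hrep _ (Finset.mem_of_mem_erase hf)
      have hstep : ∀ p q : α, p ∈ ({a, b} : Finset α) → q ∈ ({a, b} : Finset α) →
          p ∈ C → q ∈ C ∨ q = p := by
        intro p q hp hq hpC
        by_cases hpq : q = p
        · exact Or.inr hpq
        · refine Or.inl (Finset.mem_filter.2 ⟨?_, Relation.ReflTransGen.tail
            (Finset.mem_filter.1 hpC).2 ⟨{a, b}, hf, hp, hq, fun hh => hpq hh.symm⟩⟩)
          rcases Finset.mem_insert.1 hq with rfl | hq2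
          · exact haA
          · rw [Finset.mem_singleton.1 hq2]; exact hbA
      by_cases haC : a ∈ C
      · left
        intro z hz
        rcases hstep a z (by simp) hz haC with h | h
        · exact h
        · rwa [h]
      · right
        intro z hz
        have hzA : z ∈ A := by
          rcases Finset.mem_insert.1 hz with rfl | hz2
          · exact haA
          · rw [Finset.mem_singleton.1 hz2]; exact hbA
        refine Finset.mem_sdiff.2 ⟨hzA, fun hzC => ?_⟩
        rcases hstep z a hz (by simp) hzC with h | h
        · exact haC h
        · exact haC (h ▸ hzC)
    set F₁ := F'.filter (fun f => f ⊆ C) with hF₁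
    set F₂ := F'.filter (fun f => ¬ f ⊆ C) with hF₂
    have hF₂sub : ∀ f ∈ F₂, f ⊆ A \ C := by
      intro f hf
      rcases hsplit f (Finset.mem_filter.1 hf).1 with h | h
      · exact absurd h (Finset.mem_filter.1 hf).2
      · exact h
    have hbr' : ∀ (G : Finset (Finset α)), G ⊆ F' →
        ∀ e' ∈ G, ∀ a b : α, e' = {a, b} → ¬ S10EConn (G.erase e') a b := by
      intro G hG e' he' a b heq hconn
      refine hbr e' (Finset.mem_of_mem_erase (hG he')) a b heq ?_
      refine hconn.mono ?_
      intro f hf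
      exact Finset.mem_erase.2 ⟨(Finset.mem_erase.1 hf).1,
        Finset.mem_of_mem_erase (hG (Finset.mem_of_mem_erase hf))⟩
    have h1 : F₁.card + 1 ≤ C.card := by
      refine ih F₁ C ?_ ?_ ?_ ⟨x, hxC⟩
      · have : F₁.card ≤ F'.card := Finset.card_le_card (Finset.filter_subset _ _)
        omega
      · intro f hf
        obtain ⟨a, b, hab, rfl, _, _⟩ := hrep _ (Finset.mem_of_mem_erase (Finset.mem_filter.1 hf).1)
        have hsubC := (Finset.mem_filter.1 hf).2
        exact ⟨a, b, hab, rfl, hsubC (by simp), hsubC (by simp)⟩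
      · exact hbr' F₁ (Finset.filter_subset _ _)
    have h2 : F₂.card + 1 ≤ (A \ C).card := by
      refine ih F₂ (A \ C) ?_ ?_ ?_ ⟨y, Finset.mem_sdiff.2 ⟨hyA, hyC⟩⟩
      · have : F₂.card ≤ F'.card := Finset.card_le_card (Finset.filter_subset _ _)
        omega
      · intro f hf
        obtain ⟨a, b, hab, rfl, _, _⟩ := hrep _ (Finset.mem_of_mem_erase (Finset.mem_filter.1 hf).1)
        have hsub := hF₂sub _ hf
        exact ⟨a, b, hab, rfl, hsub (by simp), hsub (by simp)⟩
      · exact hbr' F₂ (Finset.filter_subset _ _)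
    have h3 : F₁.card + F₂.card = F'.card := Finset.card_filter_add_card_filter_not _
    have h4 : (A \ C).card = A.card - C.card := Finset.card_sdiff_of_subset (Finset.filter_subset _ _)
    have h5 : C.card ≤ A.card := Finset.card_le_card (Finset.filter_subset _ _)
    omega

lemma s10_interior_empty {n : ℕ} (S : Finset (Fin n)) (T : Finset (Finset (Fin n)))
    (hrep : ∀ e ∈ T, ∃ a b : Fin n, a ∈ S ∧ b ∈ S ∧ a < b ∧ e = {a, b})
    (hfb : ∀ A : Finset (Fin n), A.Nonempty →
      (T.filter (fun e => e ⊆ A)).card + 1 ≤ A.card)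
    (hnc : ∀ a₁ a₂ b₁ b₂ : Fin n, ({a₁, a₂} : Finset (Fin n)) ∈ T →
      ({b₁, b₂} : Finset (Fin n)) ∈ T →
      a₁ < a₂ → b₁ < b₂ → a₁ < b₁ → b₁ < a₂ → b₂ ≤ a₂)
    (hdeg1 : ∀ v ∈ S, 1 ≤ (T.filter (fun e => v ∈ e)).card)
    (hpair : ∀ c ∈ S, (T.filter (fun e => c ∈ e)).card = 1 →
      ∃ o ∈ S, ({c, o} : Finset (Fin n)) ∈ T)
    (a b v w : Fin n) (hab : a < b) (habT : ({a, b} : Finset (Fin n)) ∈ T)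
    (hvw : (v = a ∧ w = b) ∨ (v = b ∧ w = a))
    (hnotv : ∀ e ∈ T, v ∈ e → e = ({a, b} : Finset (Fin n)))
    (hmin : ∀ c o : Fin n, c ∈ S → o ∈ S → (T.filter (fun e => c ∈ e)).card = 1 →
      ({c, o} : Finset (Fin n)) ∈ T →
      (b : ℕ) - (a : ℕ) ≤ max (c : ℕ) (o : ℕ) - min (c : ℕ) (o : ℕ)) :
    ∀ x ∈ S, ¬(a < x ∧ x < b) := by
  classical
  by_contra hcon
  push_neg at hcon
  obtain ⟨c0, hc0S, hc0ab⟩ := hcon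
  set A := S.filter (fun x => a < x ∧ x < b) with hA
  have hAne : A.Nonempty := ⟨c0, Finset.mem_filter.2 ⟨hc0S, hc0ab⟩⟩
  have hwab : w = a ∨ w = b := by
    rcases hvw with ⟨_, h⟩ | ⟨_, h⟩
    · exact Or.inr h
    · exact Or.inl h
  have hvab : v = a ∨ v = b := by
    rcases hvw with ⟨h, _⟩ | ⟨h, _⟩
    · exact Or.inl h
    · exact Or.inr h
  have hwA : w ∉ A := by
    intro hw'
    obtain ⟨_, h1, h2⟩ := Finset.mem_filter.1 hw'
    rcases hwab with rfl | rfl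
    · exact absurd h1 (lt_irrefl _)
    · exact absurd h2 (lt_irrefl _)
  set B := insert w A with hB
  have hloc : ∀ e ∈ T, (∃ c ∈ A, c ∈ e) → e ⊆ B := by
    intro e heT hce
    obtain ⟨c, hcA, hce⟩ := hce
    obtain ⟨hcS, hac, hcb⟩ := Finset.mem_filter.1 hcA
    obtain ⟨p, q, hpS, hqS, hpq, rfl⟩ := hrep e heT
    have key2 : ∀ o : Fin n, o ∈ S → ({c, o} : Finset (Fin n)) = {p, q} → o ∈ B := by
      intro o hoS heq
      have hco_T : ({c, o} : Finset (Fin n)) ∈ T := heq ▸ heT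
      have hoc : o ≠ c := by
        intro h
        subst h
        have h2 : ({o, o} : Finset (Fin n)).card = 2 := by
          rw [heq]; exact Finset.card_pair (ne_of_lt hpq)
        simp at h2
      have hob : o ≤ b := by
        by_contra hgt
        push_neg at hgt
        exact absurd (hnc a b c o habT hco_T hab (lt_trans hcb hgt) hac hcb) (not_le.2 hgt)
      have hao : a ≤ o := by
        by_contra hlt
        push_neg at hlt
        have hocT : ({o, c} : Finset (Fin n)) ∈ T := by
          rw [Finset.pair_comm]; exact hco_T
        exact absurd (hnc o c a b hocT habT (lt_trans hlt hac) hab hlt hac) (not_le.2 hcb)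
      have hov : o ≠ v := by
        intro h
        have hvmem : v ∈ ({c, o} : Finset (Fin n)) := by rw [← h]; simp
        have he2 := hnotv _ hco_T hvmem
        have hcmem : c ∈ ({a, b} : Finset (Fin n)) := by rw [← he2]; simp
        rcases Finset.mem_insert.1 hcmem with rfl | hcm
        · exact absurd hac (lt_irrefl _)
        · rw [Finset.mem_singleton] at hcm
          exact absurd (hcm ▸ hcb) (lt_irrefl _)
      by_cases how : o = w
      · rw [how]; exact Finset.mem_insert_self _ _
      · have hone : o ≠ a ∧ o ≠ b := by
          rcases hvw with ⟨h1, h2⟩ | ⟨h1, h2⟩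
          · exact ⟨fun hh => hov (hh.trans h1.symm), fun hh => how (hh.trans h2.symm)⟩
          · exact ⟨fun hh => how (hh.trans h2.symm), fun hh => hov (hh.trans h1.symm)⟩
        exact Finset.mem_insert_of_mem (Finset.mem_filter.2
          ⟨hoS, lt_of_le_of_ne hao (Ne.symm hone.1), lt_of_le_of_ne hob hone.2⟩)
    intro x hx
    rcases Finset.mem_insert.1 hce with rfl | hcq
    · rcases Finset.mem_insert.1 hx with rfl | hxq
      · exact Finset.mem_insert_of_mem hcA
      · rw [Finset.mem_singleton] at hxq
        subst hxq
        exact key2 x hqS rfl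
    · rw [Finset.mem_singleton] at hcq
      rcases Finset.mem_insert.1 hx with rfl | hxq
      · exact key2 x hpS (by rw [hcq, Finset.pair_comm])
      · rw [Finset.mem_singleton] at hxq
        subst hxq
        exact Finset.mem_insert_of_mem (hcq ▸ hcA)
  have hBcard : B.card = A.card + 1 := Finset.card_insert_of_notMem hwA
  have hdegA : ∀ c ∈ A, 2 ≤ (T.filter (fun e => c ∈ e)).card := by
    intro c hcA
    obtain ⟨hcS, hac, hcb⟩ := Finset.mem_filter.1 hcA
    by_contra hlt
    push_neg at hlt
    have hdc : (T.filter (fun e => c ∈ e)).card = 1 := by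
      have := hdeg1 c hcS; omega
    obtain ⟨o, hoS, hcoT⟩ := hpair c hcS hdc
    have hoB : o ∈ B := hloc {c, o} hcoT ⟨c, hcA, by simp⟩ (by simp)
    have hminco := hmin c o hcS hoS hdc hcoT
    have haov : (a : ℕ) ≤ (o : ℕ) ∧ (o : ℕ) ≤ (b : ℕ) := by
      rcases Finset.mem_insert.1 hoB with rfl | hoA
      · rcases hwab with rfl | rfl
        · exact ⟨le_refl _, (Fin.lt_def.1 hab).le⟩
        · exact ⟨(Fin.lt_def.1 hab).le, le_refl _⟩
      · obtain ⟨_, h1, h2⟩ := Finset.mem_filter.1 hoA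
        exact ⟨(Fin.lt_def.1 h1).le, (Fin.lt_def.1 h2).le⟩
    have hacv : (a : ℕ) < (c : ℕ) := Fin.lt_def.1 hac
    have hcbv : (c : ℕ) < (b : ℕ) := Fin.lt_def.1 hcb
    rcases le_total (c : ℕ) (o : ℕ) with h | h
    · rw [max_eq_right h, min_eq_left h] at hminco; omega
    · rw [max_eq_left h, min_eq_right h] at hminco; omega
  have hsum : ∑ v ∈ A, (T.filter (fun e => v ∈ e)).card
      = ∑ e ∈ T, (A.filter (fun x => x ∈ e)).card := by
    simp only [Finset.card_filter]
    rw [Finset.sum_comm]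
  have hge : 2 * A.card ≤ ∑ v ∈ A, (T.filter (fun e => v ∈ e)).card := by
    calc 2 * A.card = ∑ _v ∈ A, 2 := by rw [Finset.sum_const, smul_eq_mul, mul_comm]
    _ ≤ _ := Finset.sum_le_sum hdegA
  have hbound : ∀ e ∈ T, (A.filter (fun x => x ∈ e)).card
      ≤ (if e ⊆ B then 1 else 0) + (if e ⊆ A then 1 else 0) := by
    intro e heT
    have hecard : e.card = 2 := by
      obtain ⟨p, q, _, _, hpq, rfl⟩ := hrep e heT
      exact Finset.card_pair (ne_of_lt hpq)
    by_cases heB : e ⊆ B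
    · by_cases heA : e ⊆ A
      · have h2 : (A.filter (fun x => x ∈ e)).card ≤ e.card :=
          Finset.card_le_card (fun x hx => (Finset.mem_filter.1 hx).2)
        simp only [heB, heA, if_true]
        omega
      · have hwe : w ∈ e := by
          by_contra hwe
          exact heA (fun x hx => by
            rcases Finset.mem_insert.1 (heB hx) with rfl | h
            · exact absurd hx hwe
            · exact h)
        have hsub : A.filter (fun x => x ∈ e) ⊆ e.erase w := by
          intro x hx
          obtain ⟨hxA, hxe⟩ := Finset.mem_filter.1 hx
          exact Finset.mem_erase.2 ⟨fun h => hwA (h ▸ hxA), hxe⟩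
        have h2 := Finset.card_le_card hsub
        rw [Finset.card_erase_of_mem hwe, hecard] at h2
        simp only [heB, heA, if_true, if_false]
        omega
    · have hempty : A.filter (fun x => x ∈ e) = ∅ := by
        rw [Finset.filter_eq_empty_iff]
        intro x hxA hxe
        exact heB (hloc e heT ⟨x, hxA, hxe⟩)
      simp [hempty]
  have hle : ∑ e ∈ T, (A.filter (fun x => x ∈ e)).card
      ≤ (T.filter (fun e => e ⊆ B)).card + (T.filter (fun e => e ⊆ A)).card := by
    calc ∑ e ∈ T, (A.filter (fun x => x ∈ e)).card
        ≤ ∑ e ∈ T, ((if e ⊆ B then 1 else 0) + (if e ⊆ A then 1 else 0)) :=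
          Finset.sum_le_sum hbound
    _ = _ := by rw [Finset.sum_add_distrib, Finset.card_filter, Finset.card_filter]
  have hfbB := hfb B ⟨w, Finset.mem_insert_self _ _⟩
  have hfbA := hfb A hAne
  omega

lemma s10_key {n : ℕ} :
    ∀ (N : ℕ) (S : Finset (Fin n)) (T : Finset (Finset (Fin n))), S.card ≤ N →
    S.Nonempty →
    (∀ e ∈ T, ∃ a b : Fin n, a ∈ S ∧ b ∈ S ∧ a < b ∧ e = {a, b}) →
    T.card = S.card - 1 →
    (∀ A : Finset (Fin n), A.Nonempty →
      (T.filter (fun e => e ⊆ A)).card + 1 ≤ A.card) →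
    (∀ a₁ a₂ b₁ b₂ : Fin n, ({a₁, a₂} : Finset (Fin n)) ∈ T →
      ({b₁, b₂} : Finset (Fin n)) ∈ T →
      a₁ < a₂ → b₁ < b₂ → a₁ < b₁ → b₁ < a₂ → b₂ ≤ a₂) →
    ∃ l : List (Fin n × Fin n), (∀ p ∈ l, p.1 ≠ p.2) ∧
      (↑(l.map fun p => ({p.1, p.2} : Finset (Fin n))) : Multiset (Finset (Fin n)))
        = T.val ∧
      (l.map fun p => Equiv.swap p.1 p.2).prod = (S.sort (· ≤ ·)).formPerm := by
  intro N
  induction N with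
  | zero =>
    intro S T hN hS
    exact absurd (Nat.le_zero.1 hN) (Finset.card_ne_zero_of_mem hS.choose_spec)
  | succ N ih =>
    intro S T hN hS hrep hcard hfb hnc
    classical
    by_cases h1 : S.card = 1
    · obtain ⟨v, rfl⟩ := Finset.card_eq_one.1 h1
      have hT0 : T.card = 0 := by rw [hcard, h1]
      have hT : T = ∅ := Finset.card_eq_zero.1 hT0
      refine ⟨[], by simp, by simp [hT], ?_⟩
      rw [Finset.sort_singleton]
      simp
    have hS2 : 2 ≤ S.card := by
      have := Finset.card_pos.2 hS; omega
    -- every vertex has degree ≥ 1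
    have hdeg1 : ∀ v ∈ S, 1 ≤ (T.filter (fun e => v ∈ e)).card := by
      intro v hv
      by_contra h
      have h0 : T.filter (fun e => v ∈ e) = ∅ := by
        rw [← Finset.card_eq_zero]; omega
      have hTA : T.filter (fun e => e ⊆ S.erase v) = T := by
        refine Finset.filter_true_of_mem ?_
        intro e heT
        obtain ⟨p, q, hpS, hqS, hpq, rfl⟩ := hrep e heT
        have hvnot : v ∉ ({p, q} : Finset (Fin n)) := by
          intro hvm
          have : ({p, q} : Finset (Fin n)) ∈ T.filter (fun e => v ∈ e) :=
            Finset.mem_filter.2 ⟨heT, hvm⟩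
          simp [h0] at this
        intro x hx
        refine Finset.mem_erase.2 ⟨fun hxv => hvnot (hxv ▸ hx), ?_⟩
        rcases Finset.mem_insert.1 hx with rfl | hx2
        · exact hpS
        · rw [Finset.mem_singleton.1 hx2]; exact hqS
      have hne : (S.erase v).Nonempty := by
        rw [← Finset.card_pos, Finset.card_erase_of_mem hv]; omega
      have := hfb (S.erase v) hne
      rw [hTA, Finset.card_erase_of_mem hv] at this
      omega
    -- degree sum
    have hsum : ∑ v ∈ S, (T.filter (fun e => v ∈ e)).card
        = ∑ e ∈ T, (S.filter (fun x => x ∈ e)).card := by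
      simp only [Finset.card_filter]
      rw [Finset.sum_comm]
    have hsumS : ∑ v ∈ S, (T.filter (fun e => v ∈ e)).card = 2 * T.card := by
      rw [hsum]
      have h2 : ∀ e ∈ T, (S.filter (fun x => x ∈ e)).card = 2 := by
        intro e heT
        obtain ⟨p, q, hpS, hqS, hpq, rfl⟩ := hrep e heT
        have : S.filter (fun x => x ∈ ({p, q} : Finset (Fin n))) = {p, q} := by
          ext x
          simp only [Finset.mem_filter]
          constructor
          · exact fun h => h.2
          · intro h
            refine ⟨?_, h⟩
            rcases Finset.mem_insert.1 h with rfl | h2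
            · exact hpS
            · rw [Finset.mem_singleton.1 h2]; exact hqS
        rw [this]
        exact Finset.card_pair (ne_of_lt hpq)
      rw [Finset.sum_congr rfl h2, Finset.sum_const, smul_eq_mul, mul_comm]
    -- a leaf exists
    have hleaf : ∃ v ∈ S, (T.filter (fun e => v ∈ e)).card = 1 := by
      by_contra h
      push_neg at h
      have h2 : ∀ v ∈ S, 2 ≤ (T.filter (fun e => v ∈ e)).card := by
        intro v hv
        have := hdeg1 v hv
        have := h v hv
        omega
      have hgt : 2 * S.card ≤ ∑ v ∈ S, (T.filter (fun e => v ∈ e)).card := by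
        calc 2 * S.card = ∑ _v ∈ S, 2 := by rw [Finset.sum_const, smul_eq_mul, mul_comm]
        _ ≤ _ := Finset.sum_le_sum h2
      rw [hsumS, hcard] at hgt
      omega
    -- leaves have a unique edge
    have huniq : ∀ v : Fin n, (T.filter (fun e => v ∈ e)).card = 1 →
        ∀ e ∈ T, v ∈ e → ∀ e' ∈ T, v ∈ e' → e = e' := by
      intro v hdv e he hve e' he' hve'
      obtain ⟨f, hf⟩ := Finset.card_eq_one.1 hdv
      have h1 : e ∈ T.filter (fun e => v ∈ e) := Finset.mem_filter.2 ⟨he, hve⟩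
      have h2 : e' ∈ T.filter (fun e => v ∈ e) := Finset.mem_filter.2 ⟨he', hve'⟩
      rw [hf, Finset.mem_singleton] at h1 h2
      rw [h1, h2]
    -- leaves give pairs
    have hpair : ∀ c ∈ S, (T.filter (fun e => c ∈ e)).card = 1 →
        ∃ o ∈ S, ({c, o} : Finset (Fin n)) ∈ T := by
      intro c hc hdc
      have hpos : 0 < (T.filter (fun e => c ∈ e)).card := by omega
      obtain ⟨e, hef⟩ := Finset.card_pos.1 hpos
      have heT : e ∈ T := (Finset.mem_filter.1 hef).1
      have hce : c ∈ e := (Finset.mem_filter.1 hef).2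
      obtain ⟨p, q, hpS, hqS, hpq, rfl⟩ := hrep e heT
      rcases Finset.mem_insert.1 hce with rfl | hcq
      · exact ⟨q, hqS, heT⟩
      · rw [Finset.mem_singleton] at hcq
        subst hcq
        exact ⟨p, hpS, by rw [Finset.pair_comm]; exact heT⟩
    -- minimal leaf pair
    set P : Finset (Fin n × Fin n) := (S ×ˢ S).filter
      (fun p => (T.filter (fun e => p.1 ∈ e)).card = 1 ∧
        ({p.1, p.2} : Finset (Fin n)) ∈ T) with hP
    have hPne : P.Nonempty := by
      obtain ⟨v, hv, hdv⟩ := hleaf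
      obtain ⟨w, hw, hvw⟩ := hpair v hv hdv
      exact ⟨(v, w), Finset.mem_filter.2 ⟨Finset.mem_product.2 ⟨hv, hw⟩, hdv, hvw⟩⟩
    obtain ⟨⟨v, w⟩, hvwP, hmin⟩ := Finset.exists_min_image P
      (fun p => max (p.1 : ℕ) (p.2 : ℕ) - min (p.1 : ℕ) (p.2 : ℕ)) hPne
    obtain ⟨hvwS, hdv, hvwT⟩ := Finset.mem_filter.1 hvwP
    have hvS : v ∈ S := (Finset.mem_product.1 hvwS).1
    have hwS : w ∈ S := (Finset.mem_product.1 hvwS).2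
    have hvw_ne : v ≠ w := by
      intro h
      subst h
      obtain ⟨p, q, _, _, hpq, heq⟩ := hrep _ hvwT
      have : ({v, v} : Finset (Fin n)).card = 2 := by
        rw [heq]; exact Finset.card_pair (ne_of_lt hpq)
      simp at this
    have hvonly : ∀ e ∈ T, v ∈ e → e = ({v, w} : Finset (Fin n)) :=
      fun e he hve => huniq v hdv e he hve {v, w} hvwT (Finset.mem_insert_self _ _)
    -- set up a,b with orientation
    obtain ⟨a, b, hab, hor⟩ : ∃ a b : Fin n, a < b ∧
        ((v = a ∧ w = b) ∨ (v = b ∧ w = a)) := by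
      rcases lt_or_gt_of_ne hvw_ne with h | h
      · exact ⟨v, w, h, Or.inl ⟨rfl, rfl⟩⟩
      · exact ⟨w, v, h, Or.inr ⟨rfl, rfl⟩⟩
    have habT : ({a, b} : Finset (Fin n)) ∈ T := by
      rcases hor with ⟨rfl, rfl⟩ | ⟨rfl, rfl⟩
      · exact hvwT
      · rw [Finset.pair_comm]; exact hvwT
    have hdist_eq : max (v : ℕ) (w : ℕ) - min (v : ℕ) (w : ℕ) = (b : ℕ) - (a : ℕ) := by
      have habv := Fin.lt_def.1 hab
      rcases hor with ⟨rfl, rfl⟩ | ⟨rfl, rfl⟩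
      · rw [max_eq_right habv.le, min_eq_left habv.le]
      · rw [max_eq_left habv.le, min_eq_right habv.le]
    have hnotv : ∀ e ∈ T, v ∈ e → e = ({a, b} : Finset (Fin n)) := by
      intro e he hve
      rw [hvonly e he hve]
      rcases hor with ⟨rfl, rfl⟩ | ⟨rfl, rfl⟩
      · rfl
      · rw [Finset.pair_comm]
    have hminab : ∀ c o : Fin n, c ∈ S → o ∈ S →
        (T.filter (fun e => c ∈ e)).card = 1 → ({c, o} : Finset (Fin n)) ∈ T →
        (b : ℕ) - (a : ℕ) ≤ max (c : ℕ) (o : ℕ) - min (c : ℕ) (o : ℕ) := by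
      intro c o hcS hoS hdc hco
      have := hmin (c, o) (Finset.mem_filter.2 ⟨Finset.mem_product.2 ⟨hcS, hoS⟩, hdc, hco⟩)
      rw [hdist_eq] at this
      exact this
    have hint := s10_interior_empty S T hrep hfb hnc hdeg1 hpair a b v w hab habT hor
      hnotv hminab
    -- recursion setup
    have hvS' : v ∈ S := hvS
    have hS'ne : (S.erase v).Nonempty := by
      rw [← Finset.card_pos, Finset.card_erase_of_mem hvS]; omega
    set e0 : Finset (Fin n) := {v, w} with he0
    set T' := T.erase e0 with hT'
    have he0T : e0 ∈ T := hvwT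
    have hT'card : T'.card = (S.erase v).card - 1 := by
      rw [Finset.card_erase_of_mem he0T, Finset.card_erase_of_mem hvS, hcard]
    have hrep' : ∀ e ∈ T', ∃ p q : Fin n,
        p ∈ S.erase v ∧ q ∈ S.erase v ∧ p < q ∧ e = {p, q} := by
      intro e he
      have heT : e ∈ T := Finset.mem_of_mem_erase he
      obtain ⟨p, q, hpS, hqS, hpq, rfl⟩ := hrep e heT
      have hvnot : v ∉ ({p, q} : Finset (Fin n)) := by
        intro hvm
        exact (Finset.mem_erase.1 he).1 (hvonly _ heT hvm)
      refine ⟨p, q, Finset.mem_erase.2 ⟨?_, hpS⟩, Finset.mem_erase.2 ⟨?_, hqS⟩, hpq, rfl⟩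
      · intro h; exact hvnot (h ▸ Finset.mem_insert_self _ _)
      · intro h; exact hvnot (h ▸ Finset.mem_insert_of_mem (Finset.mem_singleton_self _))
    have hfb' : ∀ A : Finset (Fin n), A.Nonempty →
        (T'.filter (fun e => e ⊆ A)).card + 1 ≤ A.card := by
      intro A hA
      refine le_trans ?_ (hfb A hA)
      have : T'.filter (fun e => e ⊆ A) ⊆ T.filter (fun e => e ⊆ A) :=
        Finset.filter_subset_filter _ (Finset.erase_subset _ _)
      have := Finset.card_le_card this
      omega
    have hnc' : ∀ a₁ a₂ b₁ b₂ : Fin n, ({a₁, a₂} : Finset (Fin n)) ∈ T' →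
        ({b₁, b₂} : Finset (Fin n)) ∈ T' →
        a₁ < a₂ → b₁ < b₂ → a₁ < b₁ → b₁ < a₂ → b₂ ≤ a₂ :=
      fun a₁ a₂ b₁ b₂ h1 h2 => hnc a₁ a₂ b₁ b₂ (Finset.mem_of_mem_erase h1)
        (Finset.mem_of_mem_erase h2)
    have hNcard : (S.erase v).card ≤ N := by
      rw [Finset.card_erase_of_mem hvS]; omega
    obtain ⟨l', hl'ne, hl'ms, hl'prod⟩ := ih (S.erase v) T' hNcard hS'ne hrep'
      hT'card hfb' hnc'
    have hvalmem : e0 ∈ T.val := he0T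
    have hT'val : T'.val = T.val.erase e0 := Finset.erase_val _ _
    have hsorted := (Finset.sortedLT_sort S).pairwise
    have hnodupS := Finset.sort_nodup S (· ≤ ·)
    rcases lt_or_gt_of_ne hvw_ne with hlt | hgt
    · -- v < w : a = v, b = w
      have hva : v = a ∧ w = b := by
        rcases hor with h | ⟨h1, h2⟩
        · exact h
        · exfalso; rw [h1, h2] at hlt; exact absurd hab (not_lt.2 hlt.le)
      obtain ⟨hva1, hva2⟩ := hva
      have hni : ∀ x ∈ S.sort (· ≤ ·), ¬(v < x ∧ x < w) := by
        intro x hx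
        rw [hva1, hva2]
        exact hint x ((Finset.mem_sort _).1 hx)
      obtain ⟨l₁, l₂, hLeq⟩ := s10_sorted_consecutive_decomp _ hsorted v w
        ((Finset.mem_sort _).2 hvS) ((Finset.mem_sort _).2 hwS) hlt hni
      have hnodup' : (l₁ ++ v :: w :: l₂).Nodup := hLeq ▸ hnodupS
      have hErase : (S.erase v).sort (· ≤ ·) = l₁ ++ w :: l₂ := by
        rw [← s10_sort_erase, hLeq, s10_decomp_erase_left _ _ _ _ hnodup']
      refine ⟨(v, w) :: l', ?_, ?_, ?_⟩
      · intro p hp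
        rcases List.mem_cons.1 hp with rfl | hp2
        · exact hvw_ne
        · exact hl'ne p hp2
      · rw [List.map_cons, ← Multiset.cons_coe, hl'ms, hT'val]
        exact Multiset.cons_erase hvalmem
      · rw [List.map_cons, List.prod_cons, hl'prod, hErase, hLeq]
        exact (s10_splice1 l₁ l₂ v w hnodup').symm
    · -- w < v : a = w, b = v
      have hva : v = b ∧ w = a := by
        rcases hor with ⟨h1, h2⟩ | h
        · exfalso; rw [h1, h2] at hgt; exact absurd hab (not_lt.2 hgt.le)
        · exact h
      obtain ⟨hva1, hva2⟩ := hva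
      have hni : ∀ x ∈ S.sort (· ≤ ·), ¬(w < x ∧ x < v) := by
        intro x hx
        rw [hva1, hva2]
        exact hint x ((Finset.mem_sort _).1 hx)
      obtain ⟨l₁, l₂, hLeq⟩ := s10_sorted_consecutive_decomp _ hsorted w v
        ((Finset.mem_sort _).2 hwS) ((Finset.mem_sort _).2 hvS) hgt hni
      have hnodup' : (l₁ ++ w :: v :: l₂).Nodup := hLeq ▸ hnodupS
      have hErase : (S.erase v).sort (· ≤ ·) = l₁ ++ w :: l₂ := by
        rw [← s10_sort_erase, hLeq, s10_decomp_erase_right _ _ _ _ hnodup']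
      refine ⟨l' ++ [(v, w)], ?_, ?_, ?_⟩
      · intro p hp
        rcases List.mem_append.1 hp with hp2 | hp2
        · exact hl'ne p hp2
        · rw [List.mem_singleton.1 hp2]; exact hvw_ne
      · rw [List.map_append, ← Multiset.coe_add, hl'ms, hT'val]
        simp only [List.map_cons, List.map_nil]
        rw [← Multiset.cons_coe, Multiset.coe_nil]
        rw [add_comm]
        show e0 ::ₘ (0 : Multiset (Finset (Fin n))) + T.val.erase e0 = T.val
        rw [Multiset.cons_add, zero_add]
        exact Multiset.cons_erase hvalmem
      · rw [List.map_append, List.prod_append, hl'prod, hErase, hLeq]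
        simp only [List.map_cons, List.map_nil, List.prod_cons, List.prod_nil, mul_one]
        rw [Equiv.swap_comm v w]
        exact (s10_splice2 l₁ l₂ w v hnodup').symm



/-- (elements of `{1,…,n}` modeled as `Fin n`, `0`-indexed) let `T` be a
set of `k − 1` two-element subsets of `{0,…,k−1}` forming a tree on `{0,…,k−1}` and
noncrossing.  Then the transpositions corresponding to the edges of `T` can be ordered
so that their product is the cycle `σ = (0 1 ⋯ k−1)`. -/
theorem stmt10 {n k : ℕ} [NeZero n] (hk2 : 2 ≤ k) (hkn : k ≤ n)
    (σ : Equiv.Perm (Fin n))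
    (hσ1 : ∀ i : Fin n, (i : ℕ) + 1 < k → σ i = (Fin.ofNat n ((i : ℕ) + 1 : ℕ)))
    (hσ2 : σ (Fin.ofNat n (k - 1 : ℕ)) = (Fin.ofNat n (0 : ℕ)))
    (hσ3 : ∀ i : Fin n, k ≤ (i : ℕ) → σ i = i)
    (T : Finset (Finset (Fin n)))
    (hcard : T.card = k - 1)
    (hedges : ∀ e ∈ T, e.card = 2 ∧ ∀ x ∈ e, (x : ℕ) < k)
    (htree : ((SimpleGraph.fromRel fun u v => ({u, v} : Finset (Fin n)) ∈ T).induce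
        {x : Fin n | (x : ℕ) < k}).IsTree)
    (hnc : ∀ a₁ a₂ b₁ b₂ : Fin n,
        ({a₁, a₂} : Finset (Fin n)) ∈ T → ({b₁, b₂} : Finset (Fin n)) ∈ T →
        a₁ < a₂ → b₁ < b₂ → a₁ < b₁ → b₁ < a₂ → b₂ ≤ a₂) :
    ∃ l : List (Fin n × Fin n),
      (∀ p ∈ l, p.1 ≠ p.2) ∧
      (↑(l.map fun p => ({p.1, p.2} : Finset (Fin n))) : Multiset (Finset (Fin n)))
        = T.val ∧
      (l.map fun p => Equiv.swap p.1 p.2).prod = σ := by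
  classical
  set L : List (Fin n) := (List.range k).map (Nat.cast : ℕ → Fin n) with hL
  have hLlen : L.length = k := by simp [hL]
  have hLget : ∀ (i : ℕ) (hi : i < L.length), L[i] = ((i : ℕ) : Fin n) := by
    intro i hi
    simp [hL]
  have hLnodup : L.Nodup := by
    refine List.Nodup.map_on ?_ List.nodup_range
    intro i hi j hj hij
    rw [List.mem_range] at hi hj
    have h1 := congrArg Fin.val hij
    rwa [Fin.val_natCast, Fin.val_natCast, Nat.mod_eq_of_lt (lt_of_lt_of_le hi hkn),
      Nat.mod_eq_of_lt (lt_of_lt_of_le hj hkn)] at h1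
  have hLsorted : L.Pairwise (· ≤ ·) := by
    rw [hL, List.pairwise_map]
    refine List.Pairwise.imp_of_mem ?_ List.pairwise_lt_range
    intro i j hi hj hij
    rw [List.mem_range] at hi hj
    rw [Fin.le_def, Fin.val_natCast, Fin.val_natCast,
      Nat.mod_eq_of_lt (lt_of_lt_of_le hi hkn), Nat.mod_eq_of_lt (lt_of_lt_of_le hj hkn)]
    exact hij.le
  have hmemL : ∀ x : Fin n, x ∈ L ↔ (x : ℕ) < k := by
    intro x
    simp only [hL, List.mem_map, List.mem_range]
    constructor
    · rintro ⟨i, hik, rfl⟩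
      rwa [Fin.val_natCast, Nat.mod_eq_of_lt (lt_of_lt_of_le hik hkn)]
    · intro hx
      exact ⟨(x : ℕ), hx, Fin.cast_val_eq_self x⟩
  set S : Finset (Fin n) := Finset.univ.filter (fun x : Fin n => (x : ℕ) < k) with hSdef
  have hSL : S = L.toFinset := by
    ext x
    rw [Finset.mem_filter, List.mem_toFinset, hmemL]
    simp
  have hsort : S.sort (· ≤ ·) = L := by
    rw [hSL]
    exact s10_sort_toFinset_eq L hLnodup hLsorted
  have hScard : S.card = k := by
    rw [hSL, List.toFinset_card_of_nodup hLnodup, hLlen]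
  have hSne : S.Nonempty := by
    rw [← Finset.card_pos, hScard]; omega
  -- σ is the formPerm of L
  have hσeq : σ = L.formPerm := by
    apply Equiv.ext
    intro x
    by_cases hx : (x : ℕ) < k
    · have hxlen : (x : ℕ) < L.length := by rw [hLlen]; exact hx
      have hx0 : L[(x : ℕ)]'hxlen = x := by
        rw [hLget _ hxlen, Fin.cast_val_eq_self]
      have hF := List.formPerm_apply_getElem L hLnodup (x : ℕ) hxlen
      rw [hx0] at hF
      by_cases hx1 : (x : ℕ) + 1 < k
      · have hmod : ((x : ℕ) + 1) % L.length = (x : ℕ) + 1 := by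
          rw [hLlen]; exact Nat.mod_eq_of_lt hx1
        rw [hF, hLget, hmod]
        exact hσ1 x hx1
      · have hxk : (x : ℕ) + 1 = k := by omega
        have hmod : ((x : ℕ) + 1) % L.length = 0 := by
          rw [hLlen, hxk, Nat.mod_self]
        rw [hF, hLget, hmod]
        have hxval : x = ((k - 1 : ℕ) : Fin n) := by
          apply Fin.ext
          rw [Fin.val_natCast, Nat.mod_eq_of_lt (by omega : k - 1 < n)]
          omega
        rw [hxval]
        exact hσ2
    · have hnot : x ∉ L := fun h => hx ((hmemL x).1 h)
      rw [List.formPerm_apply_of_notMem hnot]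
      exact hσ3 x (not_lt.1 hx)
  -- edge representation
  have hrep : ∀ e ∈ T, ∃ a b : Fin n, a ∈ S ∧ b ∈ S ∧ a < b ∧ e = {a, b} := by
    intro e heT
    obtain ⟨hc2, hltk⟩ := hedges e heT
    obtain ⟨a, b, hab, rfl⟩ := Finset.card_eq_two.1 hc2
    have haS : a ∈ S := Finset.mem_filter.2 ⟨Finset.mem_univ _,
      hltk a (Finset.mem_insert_self _ _)⟩
    have hbS : b ∈ S := Finset.mem_filter.2 ⟨Finset.mem_univ _,
      hltk b (Finset.mem_insert_of_mem (Finset.mem_singleton_self _))⟩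
    rcases lt_or_gt_of_ne hab with h | h
    · exact ⟨a, b, haS, hbS, h, rfl⟩
    · exact ⟨b, a, hbS, haS, h, Finset.pair_comm a b⟩
  -- edges of 2-sets: distinct members give the pair
  have heqpair : ∀ e ∈ T, ∀ x y : Fin n, x ∈ e → y ∈ e → x ≠ y →
      e = ({x, y} : Finset (Fin n)) := by
    intro e heT x y hxe hye hxy
    have hsub : ({x, y} : Finset (Fin n)) ⊆ e := by
      intro z hz
      rcases Finset.mem_insert.1 hz with rfl | hz2
      · exact hxe
      · rw [Finset.mem_singleton.1 hz2]; exact hye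
    have hc2 := (hedges e heT).1
    refine (Finset.eq_of_subset_of_card_le hsub ?_).symm
    rw [hc2, Finset.card_pair hxy]
  -- the bridge property from the tree hypothesis
  have hbr : ∀ e ∈ T, ∀ x y : Fin n, e = {x, y} → ¬ S10EConn (T.erase e) x y := by
    intro e heT x y heq hconn
    have hxy : x ≠ y := by
      intro h
      have := (hedges e heT).1
      rw [heq, h] at this
      simp at this
    have hxk : (x : ℕ) < k := (hedges e heT).2 x (heq ▸ Finset.mem_insert_self _ _)
    have hyk : (y : ℕ) < k := (hedges e heT).2 y
      (heq ▸ Finset.mem_insert_of_mem (Finset.mem_singleton_self _))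
    set G : SimpleGraph (Fin n) :=
      SimpleGraph.fromRel (fun u v => ({u, v} : Finset (Fin n)) ∈ T) with hG
    set G₀ := G.induce {x : Fin n | (x : ℕ) < k} with hG₀
    have hadj : G₀.Adj ⟨x, hxk⟩ ⟨y, hyk⟩ := by
      show G.Adj x y
      rw [hG, SimpleGraph.fromRel_adj]
      exact ⟨hxy, Or.inl (heq ▸ heT)⟩
    have hbridge := (SimpleGraph.isAcyclic_iff_forall_adj_isBridge.1 htree.2) hadj
    rw [SimpleGraph.isBridge_iff] at hbridge
    apply hbridge
    have hreach : ∀ p q : Fin n, S10EConn (T.erase e) p q →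
        ∀ (hp : (p : ℕ) < k) (hq : (q : ℕ) < k),
        (G₀ \ SimpleGraph.fromEdgeSet {s((⟨x, hxk⟩ : {z : Fin n | (z : ℕ) < k}),
          ⟨y, hyk⟩)}).Reachable ⟨p, hp⟩ ⟨q, hq⟩ := by
      intro p q hpq
      induction hpq with
      | refl => intro hp hq; exact SimpleGraph.Reachable.refl _
      | @tail c q hpc hstep ih =>
        intro hp hq
        obtain ⟨f, hf, hcf, hqf, hne⟩ := hstep
        have hfT : f ∈ T := Finset.mem_of_mem_erase hf
        have hck : (c : ℕ) < k := (hedges f hfT).2 c hcf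
        refine (ih hp hck).trans ?_
        apply SimpleGraph.Adj.reachable
        rw [SimpleGraph.sdiff_adj]
        constructor
        · show G.Adj c q
          rw [hG, SimpleGraph.fromRel_adj]
          exact ⟨hne, Or.inl ((heqpair f hfT c q hcf hqf hne) ▸ hfT)⟩
        · rw [SimpleGraph.fromEdgeSet_adj]
          rintro ⟨hmem, -⟩
          rw [Set.mem_singleton_iff, Sym2.eq_iff] at hmem
          have hfe : f = e := by
            rcases hmem with ⟨h1, h2⟩ | ⟨h1, h2⟩
            · have hc : c = x := congrArg Subtype.val h1
              have hq2 : q = y := congrArg Subtype.val h2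
              rw [heqpair f hfT c q hcf hqf hne, hc, hq2, heq]
            · have hc : c = y := congrArg Subtype.val h1
              have hq2 : q = x := congrArg Subtype.val h2
              rw [heqpair f hfT c q hcf hqf hne, hc, hq2, heq, Finset.pair_comm]
          exact (Finset.mem_erase.1 hf).1 hfe
    exact hreach x y hconn hxk hyk
  -- forest bound
  have hfb : ∀ A : Finset (Fin n), A.Nonempty →
      (T.filter (fun e => e ⊆ A)).card + 1 ≤ A.card := by
    intro A hA
    refine s10_forest_bound (T.filter (fun e => e ⊆ A)).card _ A le_rfl ?_ ?_ hA
    · intro e he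
      obtain ⟨heT, heA⟩ := Finset.mem_filter.1 he
      obtain ⟨a, b, _, _, hab, rfl⟩ := hrep e heT
      exact ⟨a, b, ne_of_lt hab, rfl, heA (Finset.mem_insert_self _ _),
        heA (Finset.mem_insert_of_mem (Finset.mem_singleton_self _))⟩
    · intro e he a b heq hconn
      refine hbr e (Finset.mem_filter.1 he).1 a b heq (hconn.mono ?_)
      exact Finset.erase_subset_erase _ (Finset.filter_subset _ _)
  have hcard' : T.card = S.card - 1 := by rw [hScard]; exact hcard
  obtain ⟨l, h1, h2, h3⟩ := s10_key (n := n) S.card S T le_rfl hSne hrep hcard' hfb hnc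
  exact ⟨l, h1, h2, by rw [h3, hsort, ← hσeq]⟩
end

section
/- Let σ ∈ S_n be a cycle of length k ≥ 2. Then M_φ(σ) ≤ L(σ) ≤ S(σ) ≤ 4·M_φ(σ). -/
variable {n : ℕ}

/-- The minimum `φ`-cost over all transposition decompositions of `π`. -/
noncomputable def Mcost (φ : Fin n → Fin n → ℝ) (π : Equiv.Perm (Fin n)) : ℝ :=
  sInf {c : ℝ | ∃ l : List (Fin n × Fin n), (∀ p ∈ l, p.1 ≠ p.2) ∧
    (l.map fun p => Equiv.swap p.1 p.2).prod = π ∧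
    (l.map fun p => φ p.1 p.2).sum = c}

/-- The optimized cost `φ*(a,b) = M_φ(swap a b)` for `a ≠ b`, and `φ*(a,a) = 0`. -/
noncomputable def optCost (φ : Fin n → Fin n → ℝ) (a b : Fin n) : ℝ :=
  if a = b then 0 else Mcost φ (Equiv.swap a b)

/-- The minimum `ψ`-cost over all transposition decompositions of `π` consisting of
exactly `m` transpositions. -/
noncomputable def Lcost (ψ : Fin n → Fin n → ℝ) (m : ℕ) (π : Equiv.Perm (Fin n)) : ℝ :=
  sInf {c : ℝ | ∃ l : List (Fin n × Fin n), (∀ p ∈ l, p.1 ≠ p.2) ∧ l.length = m ∧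
    (l.map fun p => Equiv.swap p.1 p.2).prod = π ∧
    (l.map fun p => ψ p.1 p.2).sum = c}

/-- `S(σ) = Σ_{i ∈ supp σ} φ*(i, σ i) − max_{i ∈ supp σ} φ*(i, σ i)`. -/
noncomputable def Scost (φ : Fin n → Fin n → ℝ) (σ : Equiv.Perm (Fin n)) : ℝ :=
  (∑ i ∈ σ.support, optCost φ i (σ i)) -
    sSup ((fun i => optCost φ i (σ i)) '' (↑σ.support : Set (Fin n)))

/-! ### Auxiliary machinery -/

/-- The set of costs of transposition decompositions of `π`. -/
def Mset (φ : Fin n → Fin n → ℝ) (π : Equiv.Perm (Fin n)) : Set ℝ :=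
  {c : ℝ | ∃ l : List (Fin n × Fin n), (∀ p ∈ l, p.1 ≠ p.2) ∧
    (l.map fun p => Equiv.swap p.1 p.2).prod = π ∧
    (l.map fun p => φ p.1 p.2).sum = c}

lemma Mcost_eq (φ : Fin n → Fin n → ℝ) (π : Equiv.Perm (Fin n)) :
    Mcost φ π = sInf (Mset φ π) := rfl

section aux
variable (φ : Fin n → Fin n → ℝ) (hnn : ∀ a b : Fin n, a ≠ b → 0 ≤ φ a b)

include hnn in
lemma Mset_nonneg {π : Equiv.Perm (Fin n)} : ∀ c ∈ Mset φ π, 0 ≤ c := by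
  rintro c ⟨l, hl, -, rfl⟩
  apply List.sum_nonneg
  intro x hx
  simp only [List.mem_map] at hx
  obtain ⟨p, hp, rfl⟩ := hx
  exact hnn _ _ (hl p hp)

include hnn in
lemma Mset_bdd {π : Equiv.Perm (Fin n)} : BddBelow (Mset φ π) :=
  ⟨0, fun c hc => Mset_nonneg φ hnn c hc⟩

lemma Mset_nonempty (π : Equiv.Perm (Fin n)) : (Mset φ π).Nonempty := by
  obtain ⟨L, hprod, hswap⟩ := π.truncSwapFactors.out
  refine ⟨_, L.attach.map (fun g => ⟨(hswap g.1 g.2).choose, (hswap g.1 g.2).choose_spec.choose⟩),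
    ?_, ?_, rfl⟩
  · rintro p hp
    simp only [List.mem_map] at hp
    obtain ⟨g, -, rfl⟩ := hp
    exact (hswap g.1 g.2).choose_spec.choose_spec.1
  · rw [List.map_map]
    have : ((fun p : Fin n × Fin n => Equiv.swap p.1 p.2) ∘
        (fun g : {x // x ∈ L} => ((hswap g.1 g.2).choose, (hswap g.1 g.2).choose_spec.choose)))
        = fun g : {x // x ∈ L} => g.1 := by
      funext g
      exact ((hswap g.1 g.2).choose_spec.choose_spec.2).symm
    rw [this]
    simpa using hprod

include hnn in
lemma Mcost_nonneg (π : Equiv.Perm (Fin n)) : 0 ≤ Mcost φ π :=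
  Real.sInf_nonneg (Mset_nonneg φ hnn)

include hnn in
lemma Mcost_le_of_mem {π : Equiv.Perm (Fin n)} {c : ℝ} (hc : c ∈ Mset φ π) :
    Mcost φ π ≤ c :=
  csInf_le (Mset_bdd φ hnn) hc

include hnn in
lemma Mcost_mul_le (π₁ π₂ : Equiv.Perm (Fin n)) :
    Mcost φ (π₁ * π₂) ≤ Mcost φ π₁ + Mcost φ π₂ := by
  have key : ∀ c ∈ Mset φ π₁, ∀ d ∈ Mset φ π₂, Mcost φ (π₁ * π₂) ≤ c + d := by
    rintro c ⟨l₁, hl₁, hp₁, rfl⟩ d ⟨l₂, hl₂, hp₂, rfl⟩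
    apply Mcost_le_of_mem φ hnn
    refine ⟨l₁ ++ l₂, ?_, ?_, ?_⟩
    · intro p hp
      rcases List.mem_append.mp hp with h | h
      exacts [hl₁ p h, hl₂ p h]
    · rw [List.map_append, List.prod_append, hp₁, hp₂]
    · rw [List.map_append, List.sum_append]
  have h1 : ∀ d ∈ Mset φ π₂, Mcost φ (π₁ * π₂) - d ≤ Mcost φ π₁ := by
    intro d hd
    rw [Mcost_eq φ π₁]
    apply le_csInf (Mset_nonempty φ π₁)
    intro c hc
    linarith [key c hc d hd]
  have h2 : Mcost φ (π₁ * π₂) - Mcost φ π₁ ≤ Mcost φ π₂ := by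
    rw [Mcost_eq φ π₂]
    apply le_csInf (Mset_nonempty φ π₂)
    intro d hd
    linarith [h1 d hd]

  linarith

include hnn in
lemma Mcost_one_le : Mcost φ 1 ≤ 0 :=
  Mcost_le_of_mem φ hnn ⟨[], by simp, by simp, by simp⟩

include hnn in
lemma optCost_nonneg (a b : Fin n) : 0 ≤ optCost φ a b := by
  unfold optCost
  split
  · exact le_refl 0
  · exact Mcost_nonneg φ hnn _

include hnn in
lemma optCost_le {a b : Fin n} (hab : a ≠ b) : optCost φ a b ≤ φ a b := by
  rw [optCost, if_neg hab]
  exact Mcost_le_of_mem φ hnn ⟨[(a, b)], by simpa using hab, by simp, by simp⟩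

lemma optCost_comm (a b : Fin n) : optCost φ a b = optCost φ b a := by
  unfold optCost
  rcases eq_or_ne a b with rfl | hab
  · simp
  · rw [if_neg hab, if_neg hab.symm, Equiv.swap_comm]

lemma optCost_eq_Mcost {a b : Fin n} (hab : a ≠ b) :
    optCost φ a b = Mcost φ (Equiv.swap a b) := by
  rw [optCost, if_neg hab]

include hnn in
lemma key3 {a b : Fin n} (hab : a ≠ b) (x : Fin n) :
    optCost φ x b ≤ optCost φ x a + 2 * optCost φ a b := by
  rcases eq_or_ne x b with rfl | hxb
  · have h0 : optCost φ x x = 0 := if_pos rfl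
    rw [h0]
    have h1 := optCost_nonneg φ hnn x a
    have h2 := optCost_nonneg φ hnn a x
    linarith
  rcases eq_or_ne x a with rfl | hxa
  · have h0 : optCost φ x x = 0 := if_pos rfl
    rw [h0]
    have h1 := optCost_nonneg φ hnn x b
    linarith
  · have hid : Equiv.swap a b * Equiv.swap x a * Equiv.swap a b = Equiv.swap b x :=
      Equiv.swap_mul_swap_mul_swap hxa hxb
    rw [optCost_eq_Mcost φ hxb, optCost_eq_Mcost φ hxa, optCost_eq_Mcost φ hab,
      Equiv.swap_comm x b, ← hid, mul_assoc]
    calc Mcost φ (Equiv.swap a b * (Equiv.swap x a * Equiv.swap a b))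
        ≤ Mcost φ (Equiv.swap a b) + Mcost φ (Equiv.swap x a * Equiv.swap a b) :=
          Mcost_mul_le φ hnn _ _
      _ ≤ Mcost φ (Equiv.swap a b) + (Mcost φ (Equiv.swap x a) + Mcost φ (Equiv.swap a b)) := by
          linarith [Mcost_mul_le φ hnn (Equiv.swap x a) (Equiv.swap a b)]
      _ = Mcost φ (Equiv.swap x a) + 2 * Mcost φ (Equiv.swap a b) := by ring

include hnn in
lemma Mcost_le_sum_optCost : ∀ l : List (Fin n × Fin n), (∀ p ∈ l, p.1 ≠ p.2) →
    Mcost φ (l.map fun p => Equiv.swap p.1 p.2).prod ≤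
      (l.map fun p => optCost φ p.1 p.2).sum := by
  intro l
  induction l with
  | nil => simpa using Mcost_one_le φ hnn
  | cons p l ih =>
    intro hl
    have hp : p.1 ≠ p.2 := hl p List.mem_cons_self
    simp only [List.map_cons, List.prod_cons, List.sum_cons]
    calc Mcost φ (Equiv.swap p.1 p.2 * (l.map fun p => Equiv.swap p.1 p.2).prod)
        ≤ Mcost φ (Equiv.swap p.1 p.2) + Mcost φ (l.map fun p => Equiv.swap p.1 p.2).prod :=
          Mcost_mul_le φ hnn _ _
      _ ≤ optCost φ p.1 p.2 + (l.map fun p => optCost φ p.1 p.2).sum := by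
          rw [optCost_eq_Mcost φ hp]
          exact add_le_add_right (ih fun q hq => hl q (List.mem_cons_of_mem p hq)) _

include hnn in
lemma key4 : ∀ l : List (Fin n × Fin n), (∀ p ∈ l, p.1 ≠ p.2) →
    ∑ i : Fin n, optCost φ i ((l.map fun p => Equiv.swap p.1 p.2).prod i) ≤
      4 * (l.map fun p => φ p.1 p.2).sum := by
  intro l
  induction l with
  | nil => simp [optCost]
  | cons p l ih =>
    intro hl
    have hp : p.1 ≠ p.2 := hl p List.mem_cons_self
    have hl' : ∀ q ∈ l, q.1 ≠ q.2 := fun q hq => hl q (List.mem_cons_of_mem p hq)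
    set π' : Equiv.Perm (Fin n) := (l.map fun p => Equiv.swap p.1 p.2).prod with hπ'
    set g : Fin n → ℝ := fun y =>
      (if y = p.1 then 2 * optCost φ p.1 p.2 else 0) +
      (if y = p.2 then 2 * optCost φ p.1 p.2 else 0) with hg
    have hstep : ∀ i : Fin n, optCost φ i (Equiv.swap p.1 p.2 (π' i)) ≤
        optCost φ i (π' i) + g (π' i) := by
      intro i
      rcases eq_or_ne (π' i) p.1 with h1 | h1
      · rw [h1, Equiv.swap_apply_left]
        have := key3 φ hnn hp i
        simp only [hg, if_pos rfl, if_neg hp, if_true, eq_self_iff_true, add_zero]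
        linarith
      rcases eq_or_ne (π' i) p.2 with h2 | h2
      · rw [h2, Equiv.swap_apply_right]
        have := key3 φ hnn hp.symm i
        rw [optCost_comm φ p.2 p.1] at this
        simp only [hg, if_pos rfl, if_neg hp.symm, if_true, eq_self_iff_true, zero_add]
        linarith
      · rw [Equiv.swap_apply_of_ne_of_ne h1 h2]
        simp only [hg, if_neg h1, if_neg h2, add_zero]
        exact le_refl _
    have hsumg : ∑ i : Fin n, g (π' i) = 4 * optCost φ p.1 p.2 := by
      rw [Equiv.sum_comp π' g]
      rw [hg]
      rw [Finset.sum_add_distrib]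
      rw [Finset.sum_ite_eq' Finset.univ p.1 (fun _ => 2 * optCost φ p.1 p.2),
        Finset.sum_ite_eq' Finset.univ p.2 (fun _ => 2 * optCost φ p.1 p.2)]
      simp only [Finset.mem_univ, if_pos]
      ring
    simp only [List.map_cons, List.prod_cons, List.sum_cons]
    calc ∑ i : Fin n, optCost φ i ((Equiv.swap p.1 p.2 * π') i)
        ≤ ∑ i : Fin n, (optCost φ i (π' i) + g (π' i)) := by
          apply Finset.sum_le_sum
          intro i _
          exact hstep i
      _ = (∑ i : Fin n, optCost φ i (π' i)) + ∑ i : Fin n, g (π' i) :=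
          Finset.sum_add_distrib
      _ ≤ 4 * (l.map fun p => φ p.1 p.2).sum + 4 * optCost φ p.1 p.2 := by
          rw [hsumg]
          exact add_le_add_left (ih hl') _
      _ ≤ 4 * (φ p.1 p.2 + (l.map fun p => φ p.1 p.2).sum) := by
          linarith [optCost_le φ hnn hp]

end aux

lemma list_sum_map_range (f : ℕ → ℝ) (m : ℕ) :
    ((List.range m).map f).sum = ∑ j ∈ Finset.range m, f j := by
  induction m with
  | zero => simp
  | succ m ih =>
    rw [List.range_succ, List.map_append, List.sum_append, Finset.sum_range_succ, ih]
    simp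

/-- The set of costs of decompositions with exactly `m` transpositions. -/
def Lset (ψ : Fin n → Fin n → ℝ) (m : ℕ) (π : Equiv.Perm (Fin n)) : Set ℝ :=
  {c : ℝ | ∃ l : List (Fin n × Fin n), (∀ p ∈ l, p.1 ≠ p.2) ∧ l.length = m ∧
    (l.map fun p => Equiv.swap p.1 p.2).prod = π ∧
    (l.map fun p => ψ p.1 p.2).sum = c}

lemma Lcost_eq (ψ : Fin n → Fin n → ℝ) (m : ℕ) (π : Equiv.Perm (Fin n)) :
    Lcost ψ m π = sInf (Lset ψ m π) := rfl

/-- for a cycle `σ` of length `k ≥ 2`,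
`M_φ(σ) ≤ L(σ) ≤ S(σ) ≤ 4 M_φ(σ)`, where `L(σ)` is the minimum `φ*`-cost over
decompositions of `σ` with exactly `k − 1` transpositions. -/
theorem stmt12 (φ : Fin n → Fin n → ℝ)
    (hnn : ∀ a b : Fin n, a ≠ b → 0 ≤ φ a b)
    (hsym : ∀ a b : Fin n, φ a b = φ b a)
    (k : ℕ) (hk : 2 ≤ k)
    (σ : Equiv.Perm (Fin n)) (hσ : σ.IsCycle) (hcard : σ.support.card = k) :
    Mcost φ σ ≤ Lcost (optCost φ) (k - 1) σ ∧
    Lcost (optCost φ) (k - 1) σ ≤ Scost φ σ ∧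
    Scost φ σ ≤ 4 * Mcost φ σ := by
  have hne : σ.support.Nonempty := by
    rw [← Finset.card_pos, hcard]; omega
  have himg_ne : ((fun i => optCost φ i (σ i)) '' (↑σ.support : Set (Fin n))).Nonempty :=
    (Finset.coe_nonempty.mpr hne).image _
  have himg_fin : ((fun i => optCost φ i (σ i)) '' (↑σ.support : Set (Fin n))).Finite :=
    (σ.support.finite_toSet).image _
  obtain ⟨i0, hi0mem, hi0⟩ := himg_ne.csSup_mem himg_fin
  have hi0s : i0 ∈ σ.support := hi0mem
  set x : Fin n := σ i0 with hxdef
  have hxs : x ∈ σ.support := by rw [hxdef]; exact Equiv.Perm.apply_mem_support.mpr hi0s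
  have hxne : σ x ≠ x := Equiv.Perm.mem_support.mp hxs
  have hcyc : σ.cycleOf x = σ := hσ.cycleOf_eq hxne
  have hordk : σ ^ k = 1 := by
    rw [← hcard, ← hσ.orderOf]; exact pow_orderOf_eq_one σ
  have hl0 : σ.toList x = (List.range k).map fun j => (σ ^ j) x := by
    rw [Equiv.Perm.toList, hcyc, hcard]
    apply List.ext_getElem
    · simp [List.length_iterate]
    · intro i h1 h2
      simp [List.getElem_iterate, Equiv.Perm.iterate_eq_pow]
  have hnodup : (σ.toList x).Nodup := Equiv.Perm.nodup_toList σ x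
  have hsuppF : σ.support = (σ.toList x).toFinset := by
    ext y
    rw [List.mem_toFinset, Equiv.Perm.mem_toList_iff]
    constructor
    · intro hy
      exact ⟨hσ.sameCycle hxne (Equiv.Perm.mem_support.mp hy), hxs⟩
    · rintro ⟨⟨m, hm⟩, -⟩
      rw [← hm]
      exact Equiv.Perm.zpow_apply_mem_support.mpr hxs
  have hsum_supp : ∀ f : Fin n → ℝ,
      ∑ i ∈ σ.support, f i = ∑ j ∈ Finset.range k, f ((σ ^ j) x) := by
    intro f
    rw [hsuppF, List.sum_toFinset f hnodup, hl0, List.map_map, list_sum_map_range]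
    simp [Function.comp]
  set F : ℕ → ℝ := fun j => optCost φ ((σ ^ j) x) (σ ((σ ^ j) x)) with hF
  have hterm : ∀ j : ℕ, optCost φ ((σ ^ j) x) ((σ ^ (j+1)) x) = F j := by
    intro j
    rw [hF]
    congr 1
    rw [pow_succ']
    simp [Equiv.Perm.mul_apply]
  have hlast : (σ ^ (k-1)) x = i0 := by
    have h1 : (σ ^ k) i0 = i0 := by rw [hordk]; rfl
    have h2 : (σ ^ k) i0 = (σ ^ (k-1)) x := by
      conv_lhs => rw [show k = (k-1)+1 from by omega, pow_succ]
      simp [Equiv.Perm.mul_apply, hxdef]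
    rw [← h2, h1]
  set L : List (Fin n × Fin n) :=
    (List.range (k-1)).map (fun j => ((σ ^ j) x, (σ ^ (j+1)) x)) with hL
  have hLne : ∀ p ∈ L, p.1 ≠ p.2 := by
    intro p hp
    simp only [hL, List.mem_map, List.mem_range] at hp
    obtain ⟨j, hj, rfl⟩ := hp
    have hmem : (σ ^ j) x ∈ σ.support := Equiv.Perm.pow_apply_mem_support.mpr hxs
    have hne' : σ ((σ ^ j) x) ≠ (σ ^ j) x := Equiv.Perm.mem_support.mp hmem
    simp only [ne_eq]
    rw [pow_succ']
    intro h
    exact hne' (by simpa [Equiv.Perm.mul_apply] using h.symm)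
  have hlen : L.length = k - 1 := by simp [hL]
  have hLprod : (L.map fun p => Equiv.swap p.1 p.2).prod = σ := by
    have hform := Equiv.Perm.formPerm_toList σ x
    rw [hcyc] at hform
    rw [← hform, List.formPerm]
    congr 1
    apply List.ext_getElem
    · simp only [List.length_map, hL, List.length_range, List.length_zipWith,
        List.length_tail, Equiv.Perm.length_toList, hcyc, hcard]
      omega
    · intro i h1 h2
      simp only [hL, List.getElem_map, List.getElem_range, List.getElem_zipWith,
        List.getElem_tail, hl0]
  have hLsum : (L.map fun p => optCost φ p.1 p.2).sum = ∑ j ∈ Finset.range (k-1), F j := by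
    rw [hL, List.map_map, list_sum_map_range]
    exact Finset.sum_congr rfl fun j _ => hterm j
  have hsplit : ∑ j ∈ Finset.range k, F j = (∑ j ∈ Finset.range (k-1), F j) + F (k-1) := by
    have := Finset.sum_range_succ F (k-1)
    rwa [show (k-1)+1 = k from by omega] at this
  have hFlast : F (k-1) = sSup ((fun i => optCost φ i (σ i)) '' (↑σ.support : Set (Fin n))) := by
    rw [hF]
    simp only [hlast]
    exact hi0
  have hScost : ∑ j ∈ Finset.range (k-1), F j = Scost φ σ := by
    rw [Scost, hsum_supp (fun i => optCost φ i (σ i))]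
    have : ∑ j ∈ Finset.range k, (fun i => optCost φ i (σ i)) ((σ ^ j) x)
        = ∑ j ∈ Finset.range k, F j := rfl
    rw [this, hsplit, hFlast]
    ring
  have hmem : Scost φ σ ∈ Lset (optCost φ) (k-1) σ :=
    ⟨L, hLne, hlen, hLprod, by rw [hLsum, hScost]⟩
  have hLbdd : ∀ c ∈ Lset (optCost φ) (k-1) σ, 0 ≤ c := by
    rintro c ⟨l, hl, -, -, rfl⟩
    apply List.sum_nonneg
    intro t ht
    simp only [List.mem_map] at ht
    obtain ⟨p, -, rfl⟩ := ht
    exact optCost_nonneg φ hnn p.1 p.2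
  refine ⟨?_, ?_, ?_⟩
  · -- Mcost ≤ Lcost
    rw [Lcost_eq]
    apply le_csInf ⟨Scost φ σ, hmem⟩
    rintro d ⟨l, hl, -, hprod, rfl⟩
    have := Mcost_le_sum_optCost φ hnn l hl
    rwa [hprod] at this
  · -- Lcost ≤ Scost
    rw [Lcost_eq]
    exact csInf_le ⟨0, fun c hc => hLbdd c hc⟩ hmem
  · -- Scost ≤ 4 * Mcost
    have hsup0 : 0 ≤ sSup ((fun i => optCost φ i (σ i)) '' (↑σ.support : Set (Fin n))) :=
      hi0 ▸ optCost_nonneg φ hnn i0 (σ i0)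
    have huniv : ∑ i ∈ σ.support, optCost φ i (σ i) = ∑ i : Fin n, optCost φ i (σ i) := by
      apply Finset.sum_subset (Finset.subset_univ _)
      intro i _ hi
      have hid : σ i = i := Equiv.Perm.notMem_support.mp hi
      rw [hid]
      exact if_pos rfl
    have h4 : ∀ c ∈ Mset φ σ, ∑ i : Fin n, optCost φ i (σ i) ≤ 4 * c := by
      rintro c ⟨l, hl, hprod, rfl⟩
      have := key4 φ hnn l hl
      rwa [hprod] at this
    have hM : (∑ i : Fin n, optCost φ i (σ i)) / 4 ≤ Mcost φ σ := by
      rw [Mcost_eq]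
      apply le_csInf (Mset_nonempty φ σ)
      intro c hc
      linarith [h4 c hc]
    rw [Scost]
    linarith
end

section
/- For every permutation π ∈ S_n: M_φ(π) ≥ (1/2) Σ_{i=1}^{n} cost(p*(i, π(i))). -/
variable {n : ℕ}

/-- `p` is a path from `a` to `b`: a list of pairwise distinct elements starting
at `a` and ending at `b`. -/
def IsPathList (p : List (Fin n)) (a b : Fin n) : Prop :=
  p.Nodup ∧ p.head? = some a ∧ p.getLast? = some b

/-- The cost of a path: the sum of `φ` over consecutive pairs. -/
noncomputable def pathCost (φ : Fin n → Fin n → ℝ) (p : List (Fin n)) : ℝ :=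
  ((p.zip p.tail).map fun q => φ q.1 q.2).sum

/-- `cost(p*(a,b))`: the minimum cost over all paths from `a` to `b`,
with `cost(p*(a,a)) = 0`. -/
noncomputable def minPathCost (φ : Fin n → Fin n → ℝ) (a b : Fin n) : ℝ :=
  if a = b then 0
  else sInf {c : ℝ | ∃ p : List (Fin n), IsPathList p a b ∧ pathCost φ p = c}

section Aux

variable (φ : Fin n → Fin n → ℝ)

lemma pathCost_nil' : pathCost φ ([] : List (Fin n)) = 0 := by simp [pathCost]

lemma pathCost_single' (a : Fin n) : pathCost φ [a] = 0 := by simp [pathCost]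

lemma pathCost_cons' (a b : Fin n) (t : List (Fin n)) :
    pathCost φ (a :: b :: t) = φ a b + pathCost φ (b :: t) := by
  simp [pathCost]

variable (hnn : ∀ a b : Fin n, a ≠ b → 0 ≤ φ a b)
include hnn

lemma pathCost_nonneg' : ∀ l : List (Fin n), l.Chain' (· ≠ ·) → 0 ≤ pathCost φ l
  | [] , _ => by simp [pathCost_nil']
  | [a], _ => by simp [pathCost_single']
  | a :: b :: t, h => by
    rw [pathCost_cons']
    rcases List.isChain_cons_cons.mp h with ⟨hab, ht⟩
    have h1 := pathCost_nonneg' (b :: t) ht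
    have h2 := hnn a b hab
    linarith

lemma pathCost_le_cons' (a : Fin n) (t : List (Fin n)) (h : (a :: t).Chain' (· ≠ ·)) :
    pathCost φ t ≤ pathCost φ (a :: t) := by
  cases t with
  | nil => simp [pathCost_nil', pathCost_single']
  | cons b t' =>
    rw [pathCost_cons']
    rcases List.isChain_cons_cons.mp h with ⟨hab, _⟩
    have := hnn a b hab
    linarith

lemma pathCost_suffix_le' {q : List (Fin n)} :
    ∀ {p : List (Fin n)}, p.Chain' (· ≠ ·) → q <:+ p → pathCost φ q ≤ pathCost φ p := by
  intro p
  induction p with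
  | nil => intro _ h; rw [List.suffix_nil.mp h]
  | cons a t ih =>
    intro hc hq
    rcases List.suffix_cons_iff.mp hq with rfl | hq'
    · exact le_refl _
    · calc pathCost φ q ≤ pathCost φ t := ih hc.tail hq'
        _ ≤ pathCost φ (a :: t) := pathCost_le_cons' φ hnn a t hc

lemma minPathCost_nonneg' (a b : Fin n) : 0 ≤ minPathCost φ a b := by
  unfold minPathCost
  split
  · exact le_refl 0
  · apply Real.sInf_nonneg
    rintro x ⟨p, hp, rfl⟩
    exact pathCost_nonneg' φ hnn p hp.1.isChain

lemma minPathCost_bdd' (a b : Fin n) :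
    BddBelow {c : ℝ | ∃ p : List (Fin n), IsPathList p a b ∧ pathCost φ p = c} := by
  refine ⟨0, ?_⟩
  rintro x ⟨p, hp, rfl⟩
  exact pathCost_nonneg' φ hnn p hp.1.isChain

omit hnn in
lemma isPathList_pair (a b : Fin n) (hab : a ≠ b) : IsPathList [a, b] a b := by
  refine ⟨by simp [hab], rfl, by simp⟩

lemma minPathCost_le_phi' (a b : Fin n) (hab : a ≠ b) : minPathCost φ a b ≤ φ a b := by
  unfold minPathCost
  rw [if_neg hab]
  have hmem : φ a b ∈ {c : ℝ | ∃ p : List (Fin n), IsPathList p a b ∧ pathCost φ p = c} :=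
    ⟨[a, b], isPathList_pair a b hab, by rw [pathCost_cons', pathCost_single']; ring⟩
  exact csInf_le (minPathCost_bdd' φ hnn a b) hmem

variable (hsym : ∀ a b : Fin n, φ a b = φ b a)
include hsym

omit hsym in
lemma minPathCost_tri' (a b x : Fin n) (hab : a ≠ b) :
    minPathCost φ a x ≤ φ a b + minPathCost φ b x := by
  by_cases hax : a = x
  · subst hax
    have h1 : minPathCost φ a a = 0 := by simp [minPathCost]
    have := minPathCost_nonneg' φ hnn b a
    have := hnn a b hab
    rw [h1]; linarith
  by_cases hbx : b = x
  · subst hbx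
    have h1 : minPathCost φ b b = 0 := by simp [minPathCost]
    rw [h1]
    have := minPathCost_le_phi' φ hnn a b hab
    linarith
  · -- main case : b ≠ x, a ≠ x
    have hrw : minPathCost φ b x =
        sInf {c : ℝ | ∃ p : List (Fin n), IsPathList p b x ∧ pathCost φ p = c} := by
      unfold minPathCost; rw [if_neg hbx]
    have hne : {c : ℝ | ∃ p : List (Fin n), IsPathList p b x ∧ pathCost φ p = c}.Nonempty :=
      ⟨pathCost φ [b, x], [b, x], isPathList_pair b x hbx, rfl⟩
    have key : ∀ c ∈ {c : ℝ | ∃ p : List (Fin n), IsPathList p b x ∧ pathCost φ p = c},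
        minPathCost φ a x ≤ φ a b + c := by
      rintro c ⟨p, hp, rfl⟩
      obtain ⟨hnodup, hhead, hlast⟩ := hp
      -- p = b :: t
      obtain ⟨t, rfl⟩ : ∃ t, p = b :: t := by
        cases p with
        | nil => simp at hhead
        | cons y t =>
          have hy : y = b := by simpa using hhead
          exact ⟨t, by rw [hy]⟩
      have haxrw : minPathCost φ a x =
          sInf {c : ℝ | ∃ p : List (Fin n), IsPathList p a x ∧ pathCost φ p = c} := by
        unfold minPathCost; rw [if_neg hax]
      rw [haxrw]
      by_cases hap : a ∈ b :: t
      · -- take the suffix of p starting at a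
        obtain ⟨s, t', hst⟩ := List.append_of_mem hap
        have hsuf : (a :: t') <:+ (b :: t) := hst ▸ List.suffix_append s (a :: t')
        have hq : IsPathList (a :: t') a x := by
          refine ⟨hsuf.sublist.nodup hnodup, rfl, ?_⟩
          rw [hst] at hlast
          rw [List.getLast?_append] at hlast
          have hsome : (a :: t').getLast? = some ((a :: t').getLast (by simp)) :=
            List.getLast?_eq_getLast (by simp)
          rw [hsome] at hlast ⊢
          simpa using hlast
        have hle : pathCost φ (a :: t') ≤ pathCost φ (b :: t) :=
          pathCost_suffix_le' φ hnn hnodup.isChain hsuf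
        have hmem : pathCost φ (a :: t') ∈
            {c : ℝ | ∃ p : List (Fin n), IsPathList p a x ∧ pathCost φ p = c} :=
          ⟨a :: t', hq, rfl⟩
        have := csInf_le (minPathCost_bdd' φ hnn a x) hmem
        have := hnn a b hab
        linarith
      · -- prepend a
        have hq : IsPathList (a :: b :: t) a x := by
          refine ⟨List.nodup_cons.mpr ⟨hap, hnodup⟩, rfl, ?_⟩
          rw [List.getLast?_cons_cons]; exact hlast
        have hmem : pathCost φ (a :: b :: t) ∈
            {c : ℝ | ∃ p : List (Fin n), IsPathList p a x ∧ pathCost φ p = c} :=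
          ⟨a :: b :: t, hq, rfl⟩
        have := csInf_le (minPathCost_bdd' φ hnn a x) hmem
        rw [pathCost_cons'] at this
        linarith
    have : minPathCost φ a x - φ a b ≤
        sInf {c : ℝ | ∃ p : List (Fin n), IsPathList p b x ∧ pathCost φ p = c} := by
      apply le_csInf hne
      intro c hc
      have := key c hc
      linarith
    rw [hrw]
    linarith

/-- One swap changes the total path-cost sum by at most `2 φ a b`. -/
lemma swap_step (σ : Equiv.Perm (Fin n)) (a b : Fin n) (hab : a ≠ b) :
    ∑ i : Fin n, minPathCost φ i ((σ * Equiv.swap a b) i) ≤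
      (∑ i : Fin n, minPathCost φ i (σ i)) + 2 * φ a b := by
  classical
  set f : Fin n → ℝ := fun i => minPathCost φ i ((σ * Equiv.swap a b) i) with hf
  set g : Fin n → ℝ := fun i => minPathCost φ i (σ i) with hg
  have hmema : a ∈ (Finset.univ : Finset (Fin n)) := Finset.mem_univ a
  have hmemb : b ∈ (Finset.univ : Finset (Fin n)).erase a :=
    Finset.mem_erase.mpr ⟨Ne.symm hab, Finset.mem_univ b⟩
  have hsplit : ∀ h : Fin n → ℝ, ∑ i : Fin n, h i =
      h a + (h b + ∑ i ∈ ((Finset.univ : Finset (Fin n)).erase a).erase b, h i) := by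
    intro h
    rw [Finset.add_sum_erase _ h hmemb, Finset.add_sum_erase _ h hmema]
  rw [hsplit f, hsplit g]
  have heq : ∑ i ∈ ((Finset.univ : Finset (Fin n)).erase a).erase b, f i =
      ∑ i ∈ ((Finset.univ : Finset (Fin n)).erase a).erase b, g i := by
    apply Finset.sum_congr rfl
    intro i hi
    have hib : i ≠ b := (Finset.mem_erase.mp hi).1
    have hia : i ≠ a := (Finset.mem_erase.mp (Finset.mem_erase.mp hi).2).1
    simp only [hf, hg, Equiv.Perm.mul_apply, Equiv.swap_apply_of_ne_of_ne hia hib]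
  have hfa : f a ≤ φ a b + g b := by
    simp only [hf, hg, Equiv.Perm.mul_apply, Equiv.swap_apply_left]
    exact minPathCost_tri' φ hnn a b (σ b) hab
  have hfb : f b ≤ φ a b + g a := by
    simp only [hf, hg, Equiv.Perm.mul_apply, Equiv.swap_apply_right]
    have := minPathCost_tri' φ hnn b a (σ a) (Ne.symm hab)
    rw [hsym b a] at this
    exact this
  linarith

lemma key_bound (π : Equiv.Perm (Fin n)) (l : List (Fin n × Fin n))
    (hl : ∀ p ∈ l, p.1 ≠ p.2)
    (hprod : (l.map fun p => Equiv.swap p.1 p.2).prod = π) :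
    ∑ i : Fin n, minPathCost φ i (π i) ≤ 2 * (l.map fun p => φ p.1 p.2).sum := by
  induction l using List.reverseRecOn generalizing π with
  | nil =>
    simp only [List.map_nil, List.prod_nil] at hprod
    subst hprod
    simp [minPathCost]
  | append_singleton l x ih =>
    have hx : x.1 ≠ x.2 := hl x (by simp)
    have hl' : ∀ p ∈ l, p.1 ≠ p.2 := fun p hp => hl p (by simp [hp])
    set σ := (l.map fun p => Equiv.swap p.1 p.2).prod with hσ
    have hπ : π = σ * Equiv.swap x.1 x.2 := by
      rw [← hprod]; simp [hσ]
    have h1 := ih σ hl' rfl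
    have h2 := swap_step φ hnn hsym σ x.1 x.2 hx
    rw [hπ]
    have hsum : ((l ++ [x]).map fun p => φ p.1 p.2).sum =
        (l.map fun p => φ p.1 p.2).sum + φ x.1 x.2 := by simp
    rw [hsum]
    linarith

omit hnn hsym in
lemma swaps_to_pairs : ∀ L : List (Equiv.Perm (Fin n)), (∀ g ∈ L, g.IsSwap) →
    ∃ l : List (Fin n × Fin n), (∀ p ∈ l, p.1 ≠ p.2) ∧
      (l.map fun p => Equiv.swap p.1 p.2).prod = L.prod
  | [], _ => ⟨[], by simp, by simp⟩
  | g :: L, h => by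
    obtain ⟨a, b, hab, hg⟩ := h g (by simp)
    obtain ⟨l, hl, hprod⟩ := swaps_to_pairs L (fun g' hg' => h g' (by simp [hg']))
    refine ⟨(a, b) :: l, ?_, by simp [hprod, hg]⟩
    intro p hp
    rcases List.mem_cons.mp hp with rfl | hp'
    · exact hab
    · exact hl p hp'

end Aux

/-- for every permutation `π`,
`M_φ(π) ≥ (1/2) Σ_{i} cost(p*(i, π i))`. -/
theorem stmt13 (φ : Fin n → Fin n → ℝ)
    (hnn : ∀ a b : Fin n, a ≠ b → 0 ≤ φ a b)
    (hsym : ∀ a b : Fin n, φ a b = φ b a)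
    (π : Equiv.Perm (Fin n)) :
    (1 / 2 : ℝ) * ∑ i : Fin n, minPathCost φ i (π i) ≤ Mcost φ π := by
  have hne : {c : ℝ | ∃ l : List (Fin n × Fin n), (∀ p ∈ l, p.1 ≠ p.2) ∧
      (l.map fun p => Equiv.swap p.1 p.2).prod = π ∧
      (l.map fun p => φ p.1 p.2).sum = c}.Nonempty := by
    obtain ⟨L, hLprod, hLswap⟩ := (Equiv.Perm.truncSwapFactors π).out
    obtain ⟨l, hl, hprod⟩ := swaps_to_pairs L hLswap
    exact ⟨(l.map fun p => φ p.1 p.2).sum, l, hl, hprod.trans hLprod, rfl⟩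
  apply le_csInf hne
  rintro c ⟨l, hl, hprod, rfl⟩
  have := key_bound φ hnn hsym π l hl hprod
  linarith
end

section
/- Let φ be the metric-path cost function with nonnegative weights w_1, …, w_{n−1}, i.e., φ(i,j) = Σ_{t=min(i,j)}^{max(i,j)−1} w_t for i ≠ j. Then for every permutation π ∈ S_n: M_φ(π) = L_φ(π) = (1/2) Σ_{i=1}^{n} φ(i, π(i)) (where φ(i,i) := 0). -/
variable {n : ℕ}

/-- `c(π)`: the number of cycles of `π` acting on `Fin n`, fixed points counted as
cycles of length one (= number of nontrivial cycles + number of fixed points). -/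
noncomputable def cNum (π : Equiv.Perm (Fin n)) : ℕ :=
  π.cycleFactorsFinset.card + (n - π.support.card)


namespace Stmt16Aux

open Equiv Equiv.Perm Finset

variable {n : ℕ}




lemma sameCycle_of_pow {π : Equiv.Perm (Fin n)} {x y : Fin n} (k : ℕ) (h : (π ^ k) x = y) :
    π.SameCycle x y := ⟨k, by simpa using h⟩

lemma sameCycle_iff_exists_pow {π : Equiv.Perm (Fin n)} {x y : Fin n} :
    π.SameCycle x y ↔ ∃ k : ℕ, (π ^ k) x = y := by
  constructor
  · intro h
    obtain ⟨i, _, hi⟩ := h.exists_pow_eq'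
    exact ⟨i, hi⟩
  · rintro ⟨k, hk⟩
    exact sameCycle_of_pow k hk

lemma sameCycle_mul_swap_or {π : Equiv.Perm (Fin n)} {x y z : Fin n}
    (h : π.SameCycle x z) :
    (π * Equiv.swap x y).SameCycle x z ∨ (π * Equiv.swap x y).SameCycle y z := by
  set σ := π * Equiv.swap x y with hσ
  have hσx : σ x = π y := by simp [hσ]
  have hσy : σ y = π x := by simp [hσ]
  have hσz : ∀ w, w ≠ x → w ≠ y → σ w = π w := fun w h1 h2 => by
    simp [hσ, Equiv.swap_apply_of_ne_of_ne h1 h2]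
  obtain ⟨k, hk⟩ := sameCycle_iff_exists_pow.1 h
  clear h
  induction k generalizing z with
  | zero =>
    left
    simp only [pow_zero, Equiv.Perm.one_apply] at hk
    exact hk ▸ Equiv.Perm.SameCycle.refl _ _
  | succ k ih =>
    have hk' : π ((π ^ k) x) = z := by
      rw [← hk, pow_succ']
      rfl
    set wv := (π ^ k) x with hwv
    rcases ih rfl with h1 | h1
    · -- σ.SameCycle x wv
      by_cases hwx : wv = x
      · right
        have : σ y = z := by rw [hσy, ← hwx, hk']
        exact sameCycle_of_pow 1 (by simpa using this)
      · by_cases hwy : wv = y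
        · left
          have : σ x = z := by rw [hσx, ← hwy, hk']
          exact sameCycle_of_pow 1 (by simpa using this)
        · left
          have : σ wv = z := by rw [hσz wv hwx hwy, hk']
          exact h1.trans (sameCycle_of_pow 1 (by simpa using this))
    · -- σ.SameCycle y wv
      by_cases hwx : wv = x
      · right
        have : σ y = z := by rw [hσy, ← hwx, hk']
        exact sameCycle_of_pow 1 (by simpa using this)
      · by_cases hwy : wv = y
        · left
          have : σ x = z := by rw [hσx, ← hwy, hk']
          exact sameCycle_of_pow 1 (by simpa using this)
        · right
          have : σ wv = z := by rw [hσz wv hwx hwy, hk']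
          exact h1.trans (sameCycle_of_pow 1 (by simpa using this))

lemma pow_mul_swap_eq {π : Equiv.Perm (Fin n)} {x y z : Fin n}
    (hx : ¬ π.SameCycle x z) (hy : ¬ π.SameCycle y z) :
    ∀ k : ℕ, ((π * Equiv.swap x y) ^ k) z = (π ^ k) z := by
  intro k
  induction k with
  | zero => simp
  | succ k ih =>
    have h1 : (π ^ k) z ≠ x := by
      intro h
      exact hx (sameCycle_of_pow k h).symm
    have h2 : (π ^ k) z ≠ y := by
      intro h
      exact hy (sameCycle_of_pow k h).symm
    rw [pow_succ', pow_succ', Equiv.Perm.mul_apply, Equiv.Perm.mul_apply, ih,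
      Equiv.Perm.mul_apply, Equiv.swap_apply_of_ne_of_ne h1 h2]


lemma mul_swap_swap (π : Equiv.Perm (Fin n)) (x y : Fin n) :
    (π * Equiv.swap x y) * Equiv.swap x y = π := by
  rw [mul_assoc, Equiv.swap_mul_self, mul_one]

lemma sameCycle_fixed {π : Equiv.Perm (Fin n)} {x y : Fin n} (h : π x = x)
    (hs : π.SameCycle x y) : y = x := by
  obtain ⟨k, hk⟩ := sameCycle_iff_exists_pow.1 hs
  have : ∀ m : ℕ, (π ^ m) x = x := by
    intro m
    induction m with
    | zero => simp
    | succ m ih => rw [pow_succ', Equiv.Perm.mul_apply, ih, h]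
  rw [← hk, this]

lemma not_sameCycle_mul_swap {π : Equiv.Perm (Fin n)} {x y : Fin n} (hxy : x ≠ y)
    (hsc : π.SameCycle x y) : ¬ (π * Equiv.swap x y).SameCycle x y := by
  set σ := π * Equiv.swap x y with hσ
  have hσx : σ x = π y := by simp [hσ]
  have hσy : σ y = π x := by simp [hσ]
  have hσz : ∀ w, w ≠ x → w ≠ y → σ w = π w := fun w h1 h2 => by
    simp [hσ, Equiv.swap_apply_of_ne_of_ne h1 h2]
  have hex : ∃ a : ℕ, (π ^ a) x = y := sameCycle_iff_exists_pow.1 hsc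
  set a := Nat.find hex with hadef
  have ha : (π ^ a) x = y := Nat.find_spec hex
  have ha0 : a ≠ 0 := by
    intro h0
    rw [h0] at ha
    simp at ha
    exact hxy ha
  set B : Finset (Fin n) := (Finset.Ico 1 (a + 1)).image (fun j => (π ^ j) x) with hB
  have hyB : y ∈ B := by
    rw [hB]
    refine Finset.mem_image.2 ⟨a, ?_, ha⟩
    rw [Finset.mem_Ico]
    omega
  have hxB : x ∉ B := by
    rw [hB]
    intro hmem
    obtain ⟨j, hj, hjx⟩ := Finset.mem_image.1 hmem
    rw [Finset.mem_Ico] at hj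
    rcases eq_or_lt_of_le (Nat.lt_succ_iff.1 hj.2) with heq | hlt
    · rw [heq] at hjx
      exact hxy (hjx.symm.trans ha)
    · have : (π ^ (a - j)) x = y := by
        rw [← hjx, ← Equiv.Perm.mul_apply, ← pow_add]
        rw [Nat.sub_add_cancel (le_of_lt hlt)]
        exact ha
      exact Nat.find_min hex (by omega) this
  have hcl : ∀ z ∈ B, σ z ∈ B := by
    intro z hz
    obtain ⟨j, hj, hjz⟩ := Finset.mem_image.1 hz
    rw [Finset.mem_Ico] at hj
    by_cases hzy : z = y
    · rw [hzy, hσy]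
      refine Finset.mem_image.2 ⟨1, ?_, by simp⟩
      rw [Finset.mem_Ico]
      omega
    · have hzx : z ≠ x := fun h => hxB (h ▸ hz)
      have hja : j < a := by
        rcases Nat.lt_succ_iff_lt_or_eq.1 hj.2 with h | h
        · exact h
        · exfalso; exact hzy (by rw [← hjz, h, ha])
      rw [hσz z hzx hzy]
      refine Finset.mem_image.2 ⟨j + 1, ?_, ?_⟩
      · rw [Finset.mem_Ico]; omega
      · rw [pow_succ', Equiv.Perm.mul_apply, hjz]
  intro hcon
  obtain ⟨k, hk⟩ := sameCycle_iff_exists_pow.1 hcon.symm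
  have : ∀ m : ℕ, (σ ^ m) y ∈ B := by
    intro m
    induction m with
    | zero => simpa using hyB
    | succ m ih =>
      rw [pow_succ', Equiv.Perm.mul_apply]
      exact hcl _ ih
  exact hxB (hk ▸ this k)

lemma sameCycle_mul_swap_iff_of_not {π : Equiv.Perm (Fin n)} {x y z w : Fin n}
    (hsc : π.SameCycle x y) (hx : ¬ π.SameCycle x z) :
    ((π * Equiv.swap x y).SameCycle z w ↔ π.SameCycle z w) := by
  have hy : ¬ π.SameCycle y z := fun h => hx (hsc.trans h)
  have key : ∀ k : ℕ, ((π * Equiv.swap x y) ^ k) z = (π ^ k) z := pow_mul_swap_eq hx hy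
  constructor
  · intro h
    obtain ⟨k, hk⟩ := sameCycle_iff_exists_pow.1 h
    exact sameCycle_of_pow k (by rw [← key k]; exact hk)
  · intro h
    obtain ⟨k, hk⟩ := sameCycle_iff_exists_pow.1 h
    exact sameCycle_of_pow k (by rw [key k]; exact hk)



def Mins (π : Equiv.Perm (Fin n)) : Finset (Fin n) :=
  univ.filter (fun x => ∀ y, π.SameCycle x y → x ≤ y)

lemma mem_Mins_iff {π : Equiv.Perm (Fin n)} {x : Fin n} :
    x ∈ Mins π ↔ ∀ y, π.SameCycle x y → x ≤ y := by
  simp [Mins]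

lemma cNum_eq_card_Mins (π : Equiv.Perm (Fin n)) : cNum π = (Mins π).card := by
  classical
  have hsplit : ((Mins π).filter (fun z => z ∈ π.support)).card
      + ((Mins π).filter (fun z => ¬ z ∈ π.support)).card = (Mins π).card :=
    Finset.card_filter_add_card_filter_not _
  -- fixed points part
  have hfix : (Mins π).filter (fun z => ¬ z ∈ π.support) = π.supportᶜ := by
    ext z
    simp only [Finset.mem_filter, Finset.mem_compl, mem_Mins_iff]
    constructor
    · rintro ⟨_, h⟩; exact h
    · intro h
      refine ⟨fun y hy => ?_, h⟩
      have hz : π z = z := by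
        rw [Equiv.Perm.mem_support, not_not] at h
        exact h
      rw [sameCycle_fixed hz hy]
  have hfixcard : ((Mins π).filter (fun z => ¬ z ∈ π.support)).card = n - π.support.card := by
    rw [hfix, Finset.card_compl, Fintype.card_fin]
  -- support part
  have hsup : ((Mins π).filter (fun z => z ∈ π.support)).card = π.cycleFactorsFinset.card := by
    refine Finset.card_bij (fun a _ => π.cycleOf a) ?_ ?_ ?_
    · intro a ha
      rw [Finset.mem_filter] at ha
      exact cycleOf_mem_cycleFactorsFinset_iff.2 ha.2
    · intro a ha b hb hab
      rw [Finset.mem_filter, mem_Mins_iff] at ha hb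
      have hbmem : b ∈ (π.cycleOf b).support :=
        mem_support_cycleOf_iff.2 ⟨Equiv.Perm.SameCycle.refl _ _, hb.2⟩
      rw [← hab] at hbmem
      have hab' : π.SameCycle a b := (mem_support_cycleOf_iff.1 hbmem).1
      have hamem : a ∈ (π.cycleOf a).support :=
        mem_support_cycleOf_iff.2 ⟨Equiv.Perm.SameCycle.refl _ _, ha.2⟩
      rw [hab] at hamem
      have hba' : π.SameCycle b a := (mem_support_cycleOf_iff.1 hamem).1
      exact le_antisymm (ha.1 b hab') (hb.1 a hba')
    · intro c hc
      have hcyc : c.IsCycle := (mem_cycleFactorsFinset_iff.1 hc).1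
      obtain ⟨z, hz⟩ := hcyc.nonempty_support
      have hzπ : z ∈ π.support := mem_cycleFactorsFinset_support_le hc hz
      set O : Finset (Fin n) := univ.filter (fun u => π.SameCycle z u) with hO
      have hOne : O.Nonempty := ⟨z, by simp [hO, Equiv.Perm.SameCycle.refl]⟩
      set a := O.min' hOne with hadef
      have haO : a ∈ O := O.min'_mem hOne
      have hza : π.SameCycle z a := by
        rw [hO] at haO
        simpa using haO
      have haπ : a ∈ π.support := by
        by_contra hfp
        rw [Equiv.Perm.mem_support, not_not] at hfp
        have : z = a := sameCycle_fixed hfp hza.symm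
        exact (Equiv.Perm.mem_support.1 hzπ) (by rw [this]; exact hfp)
      have haM : a ∈ Mins π := by
        rw [mem_Mins_iff]
        intro y hy
        have : y ∈ O := by
          rw [hO]
          simp only [Finset.mem_filter, Finset.mem_univ, true_and]
          exact hza.trans hy
        exact O.min'_le y this
      refine ⟨a, Finset.mem_filter.2 ⟨haM, haπ⟩, ?_⟩
      have h1 : c = π.cycleOf z := cycle_is_cycleOf hz hc
      have h2 : π.cycleOf z = π.cycleOf a := hza.cycleOf_eq
      show π.cycleOf a = c
      rw [← h2, ← h1]
  rw [cNum, ← hsplit, hsup, hfixcard]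

lemma mins_card_mul_swap {π : Equiv.Perm (Fin n)} {x y : Fin n} (hxy : x ≠ y)
    (hsc : π.SameCycle x y) :
    (Mins (π * Equiv.swap x y)).card = (Mins π).card + 1 := by
  classical
  set σ := π * Equiv.swap x y with hσdef
  set O : Finset (Fin n) := univ.filter (fun z => π.SameCycle x z) with hO
  set O1 : Finset (Fin n) := univ.filter (fun z => σ.SameCycle x z) with hO1
  set O2 : Finset (Fin n) := univ.filter (fun z => σ.SameCycle y z) with hO2
  have hmemO : ∀ z, z ∈ O ↔ π.SameCycle x z := fun z => by simp [hO]
  have hmemO1 : ∀ z, z ∈ O1 ↔ σ.SameCycle x z := fun z => by simp [hO1]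
  have hmemO2 : ∀ z, z ∈ O2 ↔ σ.SameCycle y z := fun z => by simp [hO2]
  -- transfers
  have hO1O : ∀ z, σ.SameCycle x z → π.SameCycle x z := by
    intro z h
    have := sameCycle_mul_swap_or (y := y) h
    rw [mul_swap_swap] at this
    rcases this with h' | h'
    · exact h'
    · exact hsc.trans h'
  have hO2O : ∀ z, σ.SameCycle y z → π.SameCycle x z := by
    intro z h
    have := sameCycle_mul_swap_or (y := x) h
    rw [Equiv.swap_comm, mul_swap_swap] at this
    rcases this with h' | h'
    · exact hsc.trans h'
    · exact h'
  have hOsplit : ∀ z, π.SameCycle x z → (σ.SameCycle x z ∨ σ.SameCycle y z) :=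
    fun z h => sameCycle_mul_swap_or h
  have hndis : ¬ σ.SameCycle x y := not_sameCycle_mul_swap hxy hsc
  -- minimum elements
  have hxO1 : x ∈ O1 := (hmemO1 x).2 (Equiv.Perm.SameCycle.refl _ _)
  have hyO2 : y ∈ O2 := (hmemO2 y).2 (Equiv.Perm.SameCycle.refl _ _)
  set m1 := O1.min' ⟨x, hxO1⟩ with hm1def
  set m2 := O2.min' ⟨y, hyO2⟩ with hm2def
  have hm1O1 : m1 ∈ O1 := O1.min'_mem _
  have hm2O2 : m2 ∈ O2 := O2.min'_mem _
  have hm1sc : σ.SameCycle x m1 := (hmemO1 m1).1 hm1O1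
  have hm2sc : σ.SameCycle y m2 := (hmemO2 m2).1 hm2O2
  have hm1m2 : m1 ≠ m2 := by
    intro h
    exact hndis (hm1sc.trans (h ▸ hm2sc).symm)
  have claim1 : (Mins σ).filter (fun z => z ∈ O) = {m1, m2} := by
    ext z
    simp only [Finset.mem_filter, Finset.mem_insert, Finset.mem_singleton]
    constructor
    · rintro ⟨hzM, hzO⟩
      rcases hOsplit z ((hmemO z).1 hzO) with h | h
      · left
        have hle1 : z ≤ m1 := (mem_Mins_iff.1 hzM) m1 (h.symm.trans hm1sc)
        have hle2 : m1 ≤ z := O1.min'_le z ((hmemO1 z).2 h)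
        exact le_antisymm hle1 hle2
      · right
        have hle1 : z ≤ m2 := (mem_Mins_iff.1 hzM) m2 (h.symm.trans hm2sc)
        have hle2 : m2 ≤ z := O2.min'_le z ((hmemO2 z).2 h)
        exact le_antisymm hle1 hle2
    · rintro (rfl | rfl)
      · refine ⟨mem_Mins_iff.2 fun w hw => ?_, (hmemO m1).2 (hO1O m1 hm1sc)⟩
        exact O1.min'_le w ((hmemO1 w).2 (hm1sc.trans hw))
      · refine ⟨mem_Mins_iff.2 fun w hw => ?_, (hmemO m2).2 (hO2O m2 hm2sc)⟩
        exact O2.min'_le w ((hmemO2 w).2 (hm2sc.trans hw))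
  have hxOmem : x ∈ O := (hmemO x).2 (Equiv.Perm.SameCycle.refl _ _)
  set m := O.min' ⟨x, hxOmem⟩ with hmdef
  have hmO : m ∈ O := O.min'_mem _
  have hmsc : π.SameCycle x m := (hmemO m).1 hmO
  have claim2 : (Mins π).filter (fun z => z ∈ O) = {m} := by
    ext z
    simp only [Finset.mem_filter, Finset.mem_singleton]
    constructor
    · rintro ⟨hzM, hzO⟩
      have h := (hmemO z).1 hzO
      have hle1 : z ≤ m := (mem_Mins_iff.1 hzM) m (h.symm.trans hmsc)
      have hle2 : m ≤ z := O.min'_le z hzO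
      exact le_antisymm hle1 hle2
    · rintro rfl
      refine ⟨mem_Mins_iff.2 fun w hw => ?_, hmO⟩
      exact O.min'_le w ((hmemO w).2 (hmsc.trans hw))
  have claim3 : (Mins σ).filter (fun z => ¬ z ∈ O) = (Mins π).filter (fun z => ¬ z ∈ O) := by
    ext z
    simp only [Finset.mem_filter, mem_Mins_iff]
    constructor
    · rintro ⟨hzM, hzO⟩
      refine ⟨fun w hw => hzM w ?_, hzO⟩
      rw [hσdef]
      rw [sameCycle_mul_swap_iff_of_not hsc (fun h => hzO ((hmemO z).2 h))]
      exact hw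
    · rintro ⟨hzM, hzO⟩
      refine ⟨fun w hw => hzM w ?_, hzO⟩
      rw [hσdef] at hw
      rw [sameCycle_mul_swap_iff_of_not hsc (fun h => hzO ((hmemO z).2 h))] at hw
      exact hw
  have e1 : ((Mins σ).filter (fun z => z ∈ O)).card
      + ((Mins σ).filter (fun z => ¬ z ∈ O)).card = (Mins σ).card :=
    Finset.card_filter_add_card_filter_not _
  have e2 : ((Mins π).filter (fun z => z ∈ O)).card
      + ((Mins π).filter (fun z => ¬ z ∈ O)).card = (Mins π).card :=
    Finset.card_filter_add_card_filter_not _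
  rw [claim1] at e1
  rw [claim2] at e2
  rw [claim3] at e1
  rw [Finset.card_pair hm1m2] at e1
  rw [Finset.card_singleton] at e2
  omega


lemma phi_facts (w : ℕ → ℝ) (hw : ∀ t, t + 1 < n → 0 ≤ w t)
    (φ : Fin n → Fin n → ℝ)
    (hφ : ∀ i j : Fin n,
      φ i j = ∑ t ∈ Finset.Ico (min (i : ℕ) (j : ℕ)) (max (i : ℕ) (j : ℕ)), w t) :
    (∀ i j, φ i j = φ j i) ∧ (∀ i, φ i i = 0) ∧ (∀ i j, 0 ≤ φ i j) ∧
    (∀ i j k : Fin n, (i : ℕ) ≤ j → (j : ℕ) ≤ k → φ i k = φ i j + φ j k) ∧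
    (∀ i j k : Fin n, φ i k ≤ φ i j + φ j k) := by
  have hsym : ∀ i j : Fin n, φ i j = φ j i := by
    intro i j
    rw [hφ, hφ, min_comm, max_comm]
  have hself : ∀ i : Fin n, φ i i = 0 := by
    intro i
    rw [hφ]
    simp
  have hnonneg : ∀ i j : Fin n, 0 ≤ φ i j := by
    intro i j
    rw [hφ]
    refine Finset.sum_nonneg fun t ht => ?_
    rw [Finset.mem_Ico] at ht
    refine hw t ?_
    have hmax : max (i : ℕ) (j : ℕ) < n := Nat.max_lt.2 ⟨i.isLt, j.isLt⟩
    omega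
  have hsplitφ : ∀ i j k : Fin n, (i : ℕ) ≤ j → (j : ℕ) ≤ k → φ i k = φ i j + φ j k := by
    intro i j k hij hjk
    rw [hφ, hφ, hφ]
    rw [min_eq_left hij, max_eq_right hij, min_eq_left hjk, max_eq_right hjk,
      min_eq_left (le_trans hij hjk), max_eq_right (le_trans hij hjk)]
    exact (Finset.sum_Ico_consecutive w hij hjk).symm
  have htri : ∀ i j k : Fin n, φ i k ≤ φ i j + φ j k := by
    intro i j k
    rcases le_total (i : ℕ) (j : ℕ) with hij | hji
    · rcases le_total (j : ℕ) (k : ℕ) with hjk | hkj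
      · rw [hsplitφ i j k hij hjk]
      · rcases le_total (i : ℕ) (k : ℕ) with hik | hki
        · have e := hsplitφ i k j hik hkj
          have := hnonneg k j
          have := hsym j k
          linarith
        · have e := hsplitφ k i j hki hij
          have s1 := hsym i k
          have s2 := hsym j k
          have := hnonneg i j
          linarith
    · rcases le_total (j : ℕ) (k : ℕ) with hjk | hkj
      · rcases le_total (i : ℕ) (k : ℕ) with hik | hki
        · have e := hsplitφ j i k hji hik
          have s1 := hsym i j
          have := hnonneg j i
          linarith
        · have e := hsplitφ j k i hjk hki
          have s1 := hsym i j
          have s2 := hsym i k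
          have := hnonneg j k
          linarith
      · have e := hsplitφ k j i hkj hji
        have s1 := hsym i k
        have s2 := hsym i j
        have s3 := hsym j k
        linarith
  exact ⟨hsym, hself, hnonneg, hsplitφ, htri⟩

section Abstract
variable (φ : Fin n → Fin n → ℝ)

lemma sum_swap_indicator (σ : Equiv.Perm (Fin n)) (c : Fin n) (r : ℝ) :
    ∑ i : Fin n, (if σ i = c then r else 0) = r := by
  have h : ∀ i : Fin n, (σ i = c) = (i = σ⁻¹ c) := by
    intro i
    apply propext
    constructor
    · intro h; rw [← h]; simp
    · intro h; rw [h]; simp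
  simp_rw [h]
  rw [Finset.sum_ite_eq' univ (σ⁻¹ c) (fun _ => r)]
  simp

lemma lower_step (hsym : ∀ i j, φ i j = φ j i) (htri : ∀ i j k : Fin n, φ i k ≤ φ i j + φ j k)
    (a b : Fin n) (hab : a ≠ b) (σ : Equiv.Perm (Fin n)) :
    ∑ i : Fin n, φ i ((Equiv.swap a b * σ) i) ≤ (∑ i : Fin n, φ i (σ i)) + 2 * φ a b := by
  have key : ∀ i : Fin n, φ i ((Equiv.swap a b * σ) i) ≤ φ i (σ i)
      + ((if σ i = a then φ a b else 0) + (if σ i = b then φ a b else 0)) := by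
    intro i
    rw [Equiv.Perm.mul_apply]
    by_cases h1 : σ i = a
    · have h2 : σ i ≠ b := by rw [h1]; exact hab
      rw [h1, Equiv.swap_apply_left, if_pos rfl, if_neg (h1 ▸ h2)]
      linarith [htri i a b]
    · by_cases h2 : σ i = b
      · rw [h2, Equiv.swap_apply_right, if_neg (h2 ▸ h1), if_pos rfl]
        linarith [htri i b a, hsym b a]
      · rw [Equiv.swap_apply_of_ne_of_ne h1 h2, if_neg h1, if_neg h2]
        simp
  have hsum := Finset.sum_le_sum (fun i (_ : i ∈ univ) => key i)
  rw [Finset.sum_add_distrib, Finset.sum_add_distrib,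
    sum_swap_indicator σ a (φ a b), sum_swap_indicator σ b (φ a b)] at hsum
  linarith

lemma lower_bound (hsym : ∀ i j, φ i j = φ j i) (hself : ∀ i, φ i i = 0)
    (htri : ∀ i j k : Fin n, φ i k ≤ φ i j + φ j k) :
    ∀ l : List (Fin n × Fin n), (∀ p ∈ l, p.1 ≠ p.2) →
    (1 / 2 : ℝ) * ∑ i : Fin n, φ i (((l.map fun p => Equiv.swap p.1 p.2).prod) i)
      ≤ (l.map fun p => φ p.1 p.2).sum := by
  intro l
  induction l with
  | nil =>
    intro _
    simp [hself]
  | cons p t ih =>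
    intro hne
    have hp : p.1 ≠ p.2 := hne p (List.mem_cons_self)
    have ht : ∀ q ∈ t, q.1 ≠ q.2 := fun q hq => hne q (List.mem_cons_of_mem _ hq)
    simp only [List.map_cons, List.prod_cons, List.sum_cons]
    have hstep := lower_step φ hsym htri p.1 p.2 hp ((t.map fun q => Equiv.swap q.1 q.2).prod)
    have hih := ih ht
    linarith

lemma sum_step (hsym : ∀ i j, φ i j = φ j i)
    (hsplitφ : ∀ i j k : Fin n, (i : ℕ) ≤ j → (j : ℕ) ≤ k → φ i k = φ i j + φ j k)
    {π : Equiv.Perm (Fin n)} {x y : Fin n}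
    (h1 : (π y : ℕ) ≤ x) (h2 : (x : ℕ) < y) (h3 : (y : ℕ) ≤ π x) :
    ∑ i : Fin n, φ i ((π * Equiv.swap x y) i) = (∑ i : Fin n, φ i (π i)) - 2 * φ x y := by
  have hxy : x ≠ y := by
    intro h
    rw [h] at h2
    exact lt_irrefl _ h2
  set σ := π * Equiv.swap x y with hσ
  have hσx : σ x = π y := by simp [hσ]
  have hσy : σ y = π x := by simp [hσ]
  have hσe : ∀ i, i ≠ x → i ≠ y → σ i = π i := fun i hix hiy => by
    simp [hσ, Equiv.swap_apply_of_ne_of_ne hix hiy]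
  have hymem : y ∈ (univ : Finset (Fin n)).erase x :=
    Finset.mem_erase.2 ⟨Ne.symm hxy, Finset.mem_univ y⟩
  have split : ∀ F : Fin n → ℝ,
      ∑ i : Fin n, F i = F x + (F y + ∑ i ∈ ((univ : Finset (Fin n)).erase x).erase y, F i) := by
    intro F
    rw [← Finset.add_sum_erase _ F (Finset.mem_univ x), ← Finset.add_sum_erase _ F hymem]
  rw [split (fun i => φ i (σ i)), split (fun i => φ i (π i))]
  have hinner : ∑ i ∈ ((univ : Finset (Fin n)).erase x).erase y, φ i (σ i)
      = ∑ i ∈ ((univ : Finset (Fin n)).erase x).erase y, φ i (π i) := by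
    refine Finset.sum_congr rfl fun i hi => ?_
    rw [Finset.mem_erase, Finset.mem_erase] at hi
    rw [hσe i hi.2.1 hi.1]
  rw [hinner, hσx, hσy]
  have e1 : φ x (π x) = φ x y + φ y (π x) := hsplitφ x y (π x) (le_of_lt h2) h3
  have e2 : φ (π y) y = φ (π y) x + φ x y := hsplitφ (π y) x y h1 (le_of_lt h2)
  have s1 : φ x (π y) = φ (π y) x := hsym _ _
  have s2 : φ y (π y) = φ (π y) y := hsym _ _
  linarith
end Abstract

lemma good_pair {π : Equiv.Perm (Fin n)} (hπ : π ≠ 1) :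
    ∃ x y : Fin n, π.SameCycle x y ∧ x ≠ y ∧
      (π y : ℕ) ≤ x ∧ (x : ℕ) < y ∧ (y : ℕ) ≤ π x := by
  classical
  have hsupp : π.support.Nonempty :=
    Finset.nonempty_iff_ne_empty.2 fun h => hπ (Equiv.Perm.support_eq_empty_iff.1 h)
  set M := π.support.max' hsupp with hM
  have hMs : M ∈ π.support := π.support.max'_mem hsupp
  set x := π⁻¹ M with hx
  have hπx : π x = M := Equiv.apply_symm_apply π M
  have hxM : x ≠ M := by
    intro h
    apply Equiv.Perm.mem_support.1 hMs
    rw [← h, hπx, h]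
  have hxs : x ∈ π.support := by
    rw [Equiv.Perm.mem_support, hπx]
    exact fun h => hxM h.symm
  have hxltM : x < M := lt_of_le_of_ne (π.support.le_max' x hxs) hxM
  have hexists : ∃ y, π.SameCycle x y ∧ π y ≤ x ∧ x < y := by
    by_contra hcon
    push_neg at hcon
    -- hcon : ∀ y, SameCycle → π y ≤ x → y ≤ x
    set A : Finset (Fin n) := univ.filter (fun z => π.SameCycle x z ∧ z ≤ x) with hA
    have hsub : A.image ⇑π⁻¹ ⊆ A := by
      intro z' hz'
      obtain ⟨z, hz, rfl⟩ := Finset.mem_image.1 hz'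
      rw [hA, Finset.mem_filter] at hz
      have hsc : π.SameCycle x (π⁻¹ z) := hz.2.1.trans ⟨-1, by simp⟩
      have hle : π (π⁻¹ z) ≤ x := by rw [show π (π⁻¹ z) = z from Equiv.apply_symm_apply π z]; exact hz.2.2
      rw [hA, Finset.mem_filter]
      exact ⟨Finset.mem_univ _, hsc, hcon _ hsc hle⟩
    have hcard : (A.image ⇑π⁻¹).card = A.card :=
      Finset.card_image_of_injective _ (Equiv.injective _)
    have heq : A.image ⇑π⁻¹ = A := Finset.eq_of_subset_of_card_le hsub (le_of_eq hcard.symm)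
    have heq2 : A.image ⇑π = A := by
      conv_lhs => rw [← heq]
      rw [Finset.image_image]
      have : (⇑π ∘ ⇑π⁻¹) = id := by
        funext a
        simp
      rw [this, Finset.image_id]
    have hxA : x ∈ A := by
      rw [hA, Finset.mem_filter]
      exact ⟨Finset.mem_univ _, Equiv.Perm.SameCycle.refl _ _, le_refl _⟩
    have : π x ∈ A := heq2 ▸ Finset.mem_image_of_mem _ hxA
    rw [hπx, hA, Finset.mem_filter] at this
    exact absurd this.2.2 (not_le.2 hxltM)
  obtain ⟨y, hsc, hyx, hxy⟩ := hexists
  have hys : y ∈ π.support := by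
    rw [Equiv.Perm.mem_support]
    intro h
    rw [h] at hyx
    exact absurd (lt_of_lt_of_le hxy hyx) (lt_irrefl _)
  have hyM : y ≤ M := π.support.le_max' y hys
  refine ⟨x, y, hsc, ne_of_lt hxy, ?_, ?_, ?_⟩
  · exact hyx
  · exact hxy
  · rw [hπx]; exact hyM



lemma cNum_one : cNum (1 : Equiv.Perm (Fin n)) = n := by
  rw [cNum]
  simp

lemma cNum_lt_of_ne_one {π : Equiv.Perm (Fin n)} (hπ : π ≠ 1) : cNum π < n := by
  classical
  rw [cNum_eq_card_Mins]
  have hsupp : π.support.Nonempty :=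
    Finset.nonempty_iff_ne_empty.2 fun h => hπ (Equiv.Perm.support_eq_empty_iff.1 h)
  set M := π.support.max' hsupp with hM
  have hMs : M ∈ π.support := π.support.max'_mem hsupp
  have hMnot : M ∉ Mins π := by
    rw [mem_Mins_iff]
    push_neg
    refine ⟨π M, ⟨1, by simp⟩, ?_⟩
    have h1 : π M ∈ π.support := Equiv.Perm.apply_mem_support.2 hMs
    have h2 : π M ≤ M := π.support.le_max' _ h1
    have h3 : π M ≠ M := Equiv.Perm.mem_support.1 hMs
    exact lt_of_le_of_ne h2 h3
  have hss : Mins π ⊂ univ := by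
    rw [Finset.ssubset_univ_iff]
    intro h
    exact hMnot (h ▸ Finset.mem_univ M)
  have := Finset.card_lt_card hss
  rwa [Finset.card_univ, Fintype.card_fin] at this

lemma cNum_mul_swap {π : Equiv.Perm (Fin n)} {x y : Fin n} (hxy : x ≠ y)
    (hsc : π.SameCycle x y) : cNum (π * Equiv.swap x y) = cNum π + 1 := by
  rw [cNum_eq_card_Mins, cNum_eq_card_Mins]
  exact mins_card_mul_swap hxy hsc

lemma construct (φ : Fin n → Fin n → ℝ)
    (hsym : ∀ i j, φ i j = φ j i) (hself : ∀ i, φ i i = 0)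
    (hsplitφ : ∀ i j k : Fin n, (i : ℕ) ≤ j → (j : ℕ) ≤ k → φ i k = φ i j + φ j k) :
    ∀ k : ℕ, ∀ π : Equiv.Perm (Fin n), n - cNum π = k →
      ∃ l : List (Fin n × Fin n), (∀ p ∈ l, p.1 ≠ p.2) ∧ l.length = k ∧
        (l.map fun p => Equiv.swap p.1 p.2).prod = π ∧
        (l.map fun p => φ p.1 p.2).sum = (1 / 2 : ℝ) * ∑ i : Fin n, φ i (π i) := by
  intro k
  induction k with
  | zero =>
    intro π hπ
    have hone : π = 1 := by
      by_contra hne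
      have := cNum_lt_of_ne_one hne
      omega
    subst hone
    refine ⟨[], by simp, rfl, by simp, by simp [hself]⟩
  | succ k ih =>
    intro π hπ
    have hne : π ≠ 1 := by
      intro h
      rw [h, cNum_one] at hπ
      omega
    obtain ⟨x, y, hsc, hxy, hpy, hxlt, hyle⟩ := good_pair hne
    set σ := π * Equiv.swap x y with hσ
    have hcnt : cNum σ = cNum π + 1 := cNum_mul_swap hxy hsc
    have hσk : n - cNum σ = k := by omega
    obtain ⟨l', hl1, hl2, hl3, hl4⟩ := ih σ hσk
    refine ⟨l' ++ [(x, y)], ?_, ?_, ?_, ?_⟩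
    · intro p hp
      rcases List.mem_append.1 hp with h | h
      · exact hl1 p h
      · rw [List.mem_singleton] at h
        rw [h]
        exact hxy
    · simp [hl2]
    · rw [List.map_append, List.prod_append, hl3]
      simp only [List.map_cons, List.map_nil, List.prod_cons, List.prod_nil, mul_one]
      rw [hσ]
      exact mul_swap_swap π x y
    · rw [List.map_append, List.sum_append, hl4]
      simp only [List.map_cons, List.map_nil, List.sum_cons, List.sum_nil, add_zero]
      have hstep : ∑ i : Fin n, φ i (σ i) = (∑ i : Fin n, φ i (π i)) - 2 * φ x y :=
        sum_step φ hsym hsplitφ hpy hxlt hyle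
      rw [hstep]
      ring

end Stmt16Aux

/-- let `φ` be the metric-path cost with nonnegative weights `w t` on the
edges `(t, t+1)` of the defining path, i.e. `φ i j = Σ_{t = min i j}^{max i j − 1} w t`
(so in particular `φ i i = 0`).  Then for every permutation `π`,
`M_φ(π) = L_φ(π) = (1/2) Σ_i φ(i, π i)`. -/
theorem stmt16 (w : ℕ → ℝ) (hw : ∀ t, t + 1 < n → 0 ≤ w t)
    (φ : Fin n → Fin n → ℝ)
    (hφ : ∀ i j : Fin n,
      φ i j = ∑ t ∈ Finset.Ico (min (i : ℕ) (j : ℕ)) (max (i : ℕ) (j : ℕ)), w t)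
    (π : Equiv.Perm (Fin n)) :
    Mcost φ π = Lcost φ (n - cNum π) π ∧
    Lcost φ (n - cNum π) π = (1 / 2 : ℝ) * ∑ i : Fin n, φ i (π i) := by
  classical
  obtain ⟨hsym, hself, hnonneg, hsplitφ, htri⟩ := Stmt16Aux.phi_facts w hw φ hφ
  obtain ⟨l, hl1, hl2, hl3, hl4⟩ :=
    Stmt16Aux.construct φ hsym hself hsplitφ (n - cNum π) π rfl
  set V : ℝ := (1 / 2 : ℝ) * ∑ i : Fin n, φ i (π i) with hV
  have hmemM : V ∈ {c : ℝ | ∃ l : List (Fin n × Fin n), (∀ p ∈ l, p.1 ≠ p.2) ∧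
      (l.map fun p => Equiv.swap p.1 p.2).prod = π ∧
      (l.map fun p => φ p.1 p.2).sum = c} := ⟨l, hl1, hl3, hl4⟩
  have hmemL : V ∈ {c : ℝ | ∃ l : List (Fin n × Fin n), (∀ p ∈ l, p.1 ≠ p.2) ∧
      l.length = n - cNum π ∧
      (l.map fun p => Equiv.swap p.1 p.2).prod = π ∧
      (l.map fun p => φ p.1 p.2).sum = c} := ⟨l, hl1, hl2, hl3, hl4⟩
  have hlbM : ∀ c ∈ {c : ℝ | ∃ l : List (Fin n × Fin n), (∀ p ∈ l, p.1 ≠ p.2) ∧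
      (l.map fun p => Equiv.swap p.1 p.2).prod = π ∧
      (l.map fun p => φ p.1 p.2).sum = c}, V ≤ c := by
    rintro c ⟨l', h1, h2, h3⟩
    rw [← h3, hV]
    have := Stmt16Aux.lower_bound φ hsym hself htri l' h1
    rw [h2] at this
    exact this
  have hlbL : ∀ c ∈ {c : ℝ | ∃ l : List (Fin n × Fin n), (∀ p ∈ l, p.1 ≠ p.2) ∧
      l.length = n - cNum π ∧
      (l.map fun p => Equiv.swap p.1 p.2).prod = π ∧
      (l.map fun p => φ p.1 p.2).sum = c}, V ≤ c := by
    rintro c ⟨l', h1, _, h3, h4⟩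
    rw [← h4, hV]
    have := Stmt16Aux.lower_bound φ hsym hself htri l' h1
    rw [h3] at this
    exact this
  have hM : Mcost φ π = V := by
    rw [Mcost]
    exact le_antisymm (csInf_le ⟨V, hlbM⟩ hmemM) (le_csInf ⟨V, hmemM⟩ hlbM)
  have hL : Lcost φ (n - cNum π) π = V := by
    rw [Lcost]
    exact le_antisymm (csInf_le ⟨V, hlbL⟩ hmemL) (le_csInf ⟨V, hmemL⟩ hlbL)
  exact ⟨hM.trans hL.symm, hL⟩
end

section
/- Let w_1, …, w_{n−1} be nonnegative reals, and define φ*(i,j) := 2 Σ_{t=min(i,j)}^{max(i,j)−1} w_t − max_{min(i,j) ≤ t ≤ max(i,j)−1} w_t for i ≠ j, and φ*(i,i) := 0. For π ∈ S_n, let M_e(π) denote the minimum, over all decompositions of π into adjacent transpositions swap(t, t+1), of the total weight (the sum of w_t over the adjacent transpositions used, with multiplicity), and let L(π) denote the minimum φ*-cost over all transposition decompositions of π consisting of exactly n − c(π) transpositions. Then L(π) ≤ 2·M_e(π). -/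
variable {n : ℕ}

/-- The optimized cost associated with nonnegative weights `w t` on the edges
`(t, t+1)` of the path `0 — 1 — ⋯ — (n−1)`:
`φ*(i,j) = 2 Σ_{t = min i j}^{max i j − 1} w t − max_{min i j ≤ t ≤ max i j − 1} w t`
for `i ≠ j`, and `φ*(i,i) = 0`. -/
noncomputable def phiStar (w : ℕ → ℝ) (i j : Fin n) : ℝ :=
  if i = j then 0
  else 2 * (∑ t ∈ Finset.Ico (min (i : ℕ) (j : ℕ)) (max (i : ℕ) (j : ℕ)), w t)
    - sSup (w '' Set.Ico (min (i : ℕ) (j : ℕ)) (max (i : ℕ) (j : ℕ)))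

open Fin.NatCast in
/-- `M_e(π)`: the minimum total weight (with multiplicity) over all decompositions of
`π` into adjacent transpositions `swap t (t+1)`. -/
noncomputable def Me [NeZero n] (w : ℕ → ℝ) (π : Equiv.Perm (Fin n)) : ℝ :=
  sInf {c : ℝ | ∃ l : List ℕ, (∀ t ∈ l, t + 1 < n) ∧
    (l.map fun t => Equiv.swap (t : Fin n) ((t + 1 : ℕ) : Fin n)).prod = π ∧
    (l.map w).sum = c}

open Fin.NatCast

/-! ### Auxiliary definitions: prefix sums and the line (pseudo)metric -/

noncomputable def fw (w : ℕ → ℝ) (k : ℕ) : ℝ := ∑ t ∈ Finset.range k, w t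

noncomputable def dd (w : ℕ → ℝ) (i j : Fin n) : ℝ := |fw w j - fw w i|

noncomputable def DD (w : ℕ → ℝ) (π : Equiv.Perm (Fin n)) : ℝ := ∑ i, dd w i (π i)

lemma fw_sub (w : ℕ → ℝ) {i j : ℕ} (hij : i ≤ j) :
    fw w j - fw w i = ∑ t ∈ Finset.Ico i j, w t := by
  rw [fw, fw, Finset.sum_Ico_eq_sub _ hij]

lemma fw_mono (w : ℕ → ℝ) (hw : ∀ t, t + 1 < n → 0 ≤ w t) {i j : ℕ} (hij : i ≤ j)
    (hj : j < n) : fw w i ≤ fw w j := by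
  rw [← sub_nonneg, fw_sub w hij]
  exact Finset.sum_nonneg fun t ht => hw t (by
    simp only [Finset.mem_Ico] at ht; omega)

lemma dd_self (w : ℕ → ℝ) (i : Fin n) : dd w i i = 0 := by simp [dd]

lemma dd_symm (w : ℕ → ℝ) (i j : Fin n) : dd w i j = dd w j i := abs_sub_comm _ _

lemma dd_nonneg (w : ℕ → ℝ) (i j : Fin n) : 0 ≤ dd w i j := abs_nonneg _

lemma dd_triangle (w : ℕ → ℝ) (i j k : Fin n) : dd w i k ≤ dd w i j + dd w j k := by
  have := abs_sub_le (fw w k) (fw w j) (fw w i)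
  simp only [dd]
  rw [add_comm]
  exact this

lemma dd_eq_sum (w : ℕ → ℝ) (hw : ∀ t, t + 1 < n → 0 ≤ w t) (i j : Fin n) :
    ∑ t ∈ Finset.Ico (min (i : ℕ) (j : ℕ)) (max (i : ℕ) (j : ℕ)), w t = dd w i j := by
  rcases le_total (i : ℕ) (j : ℕ) with h | h
  · rw [min_eq_left h, max_eq_right h, ← fw_sub w h, dd,
      abs_of_nonneg (sub_nonneg.2 (fw_mono w hw h j.isLt))]
  · rw [min_eq_right h, max_eq_left h, ← fw_sub w h, dd, abs_sub_comm,
      abs_of_nonneg (sub_nonneg.2 (fw_mono w hw h i.isLt))]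

lemma dd_between (w : ℕ → ℝ) (hw : ∀ t, t + 1 < n → 0 ≤ w t) {x y z : Fin n}
    (h1 : x ≤ y) (h2 : y ≤ z) : dd w x z = dd w x y + dd w y z := by
  have hxy : fw w x ≤ fw w y := fw_mono w hw h1 y.isLt
  have hyz : fw w y ≤ fw w z := fw_mono w hw h2 z.isLt
  simp only [dd]
  rw [abs_of_nonneg (by linarith), abs_of_nonneg (by linarith),
    abs_of_nonneg (by linarith)]
  ring

/-! ### Bounds on `phiStar` -/

lemma phiStar_le_two_dd (w : ℕ → ℝ) (hw : ∀ t, t + 1 < n → 0 ≤ w t) (i j : Fin n) :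
    phiStar w i j ≤ 2 * dd w i j := by
  by_cases h : i = j
  · subst h; simp [phiStar, dd_self, dd_nonneg]
  · have hne : (i : ℕ) ≠ (j : ℕ) := fun hc => h (Fin.ext hc)
    have hlt : min (i : ℕ) (j : ℕ) < max (i : ℕ) (j : ℕ) := by omega
    have hmem : w (min (i : ℕ) (j : ℕ)) ∈ w '' Set.Ico (min (i : ℕ) (j : ℕ)) (max (i : ℕ) (j : ℕ)) :=
      ⟨_, ⟨le_refl _, hlt⟩, rfl⟩
    have hbdd : BddAbove (w '' Set.Ico (min (i : ℕ) (j : ℕ)) (max (i : ℕ) (j : ℕ))) :=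
      ((Set.finite_Ico _ _).image w).bddAbove
    have h0 : 0 ≤ w (min (i : ℕ) (j : ℕ)) := hw _ (by
      have : max (i : ℕ) (j : ℕ) < n := by
        rcases max_cases (i : ℕ) (j : ℕ) with ⟨he, _⟩ | ⟨he, _⟩ <;> rw [he]
        exacts [i.isLt, j.isLt]
      omega)
    have hsup : 0 ≤ sSup (w '' Set.Ico (min (i : ℕ) (j : ℕ)) (max (i : ℕ) (j : ℕ))) :=
      h0.trans (le_csSup hbdd hmem)
    rw [phiStar, if_neg h, dd_eq_sum w hw i j]
    linarith

lemma phiStar_nonneg (w : ℕ → ℝ) (hw : ∀ t, t + 1 < n → 0 ≤ w t) (i j : Fin n) :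
    0 ≤ phiStar w i j := by
  by_cases h : i = j
  · simp [phiStar, h]
  · have hS : (0:ℝ) ≤ ∑ t ∈ Finset.Ico (min (i : ℕ) (j : ℕ)) (max (i : ℕ) (j : ℕ)), w t := by
      apply Finset.sum_nonneg
      intro t ht
      simp only [Finset.mem_Ico] at ht
      apply hw
      have : max (i : ℕ) (j : ℕ) ≤ n - 1 := by
        rcases max_cases (i : ℕ) (j : ℕ) with ⟨he, _⟩ | ⟨he, _⟩ <;> rw [he] <;>
          [exact Nat.le_sub_one_of_lt i.isLt; exact Nat.le_sub_one_of_lt j.isLt]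
      omega
    have hsup : sSup (w '' Set.Ico (min (i : ℕ) (j : ℕ)) (max (i : ℕ) (j : ℕ))) ≤
        ∑ t ∈ Finset.Ico (min (i : ℕ) (j : ℕ)) (max (i : ℕ) (j : ℕ)), w t := by
      apply Real.sSup_le _ hS
      rintro x ⟨t, ht, rfl⟩
      apply Finset.single_le_sum (f := w) _ (by simpa [Finset.mem_Ico] using ht)
      intro t' ht'
      simp only [Finset.mem_Ico] at ht'
      apply hw
      have : max (i : ℕ) (j : ℕ) ≤ n - 1 := by
        rcases max_cases (i : ℕ) (j : ℕ) with ⟨he, _⟩ | ⟨he, _⟩ <;> rw [he] <;>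
          [exact Nat.le_sub_one_of_lt i.isLt; exact Nat.le_sub_one_of_lt j.isLt]
      omega
    rw [phiStar, if_neg h]
    linarith

/-! ### The `M_e` side: `DD` is a lower bound for twice the adjacent weight -/

lemma DD_one (w : ℕ → ℝ) : DD w (1 : Equiv.Perm (Fin n)) = 0 := by
  simp [DD, dd_self]

lemma sum_dd_swap [NeZero n] (w : ℕ → ℝ) (hw : ∀ t, t + 1 < n → 0 ≤ w t) {t : ℕ} (ht : t + 1 < n) :
    ∑ j, dd w j (Equiv.swap (t : Fin n) ((t + 1 : ℕ) : Fin n) j) = 2 * w t := by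
  have h1 : ((t : Fin n) : ℕ) = t := Fin.val_cast_of_lt (by omega)
  have h2 : (((t + 1 : ℕ) : Fin n) : ℕ) = t + 1 := Fin.val_cast_of_lt ht
  have hne : (t : Fin n) ≠ ((t + 1 : ℕ) : Fin n) := by
    intro hc; rw [Fin.ext_iff, h1, h2] at hc; omega
  rw [← Finset.sum_subset (Finset.subset_univ ({(t : Fin n), ((t + 1 : ℕ) : Fin n)} : Finset (Fin n)))]
  · rw [Finset.sum_pair hne, Equiv.swap_apply_left, Equiv.swap_apply_right]
    have hd : dd w (t : Fin n) ((t + 1 : ℕ) : Fin n) = w t := by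
      simp only [dd, h1, h2, fw, Finset.sum_range_succ]
      rw [add_sub_cancel_left, abs_of_nonneg (hw t ht)]
    rw [dd_symm w (((t+1:ℕ) : Fin n)) ((t : Fin n)), hd]; ring
  · intro x _ hx
    simp only [Finset.mem_insert, Finset.mem_singleton, not_or] at hx
    rw [Equiv.swap_apply_of_ne_of_ne hx.1 hx.2, dd_self]

lemma DD_mul_swap_le [NeZero n] (w : ℕ → ℝ) (hw : ∀ t, t + 1 < n → 0 ≤ w t) {t : ℕ}
    (ht : t + 1 < n) (π' : Equiv.Perm (Fin n)) :
    DD w (Equiv.swap (t : Fin n) ((t + 1 : ℕ) : Fin n) * π') ≤ DD w π' + 2 * w t := by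
  set s := Equiv.swap (t : Fin n) ((t + 1 : ℕ) : Fin n) with hs
  have h1 : DD w (s * π') ≤ DD w π' + ∑ i, dd w (π' i) (s (π' i)) := by
    rw [DD, DD, ← Finset.sum_add_distrib]
    apply Finset.sum_le_sum
    intro i _
    exact dd_triangle w i (π' i) (s (π' i))
  have h2 : ∑ i, dd w (π' i) (s (π' i)) = ∑ j, dd w j (s j) :=
    Equiv.sum_comp π' (fun j => dd w j (s j))
  rw [h2, sum_dd_swap w hw ht] at h1
  exact h1

lemma DD_le_adj [NeZero n] (w : ℕ → ℝ) (hw : ∀ t, t + 1 < n → 0 ≤ w t) :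
    ∀ l : List ℕ, (∀ t ∈ l, t + 1 < n) →
      DD w ((l.map fun t => Equiv.swap (t : Fin n) ((t + 1 : ℕ) : Fin n)).prod) ≤
        2 * (l.map w).sum := by
  intro l
  induction l with
  | nil => intro _; simp [DD_one]
  | cons t l ih =>
    intro hl
    have ht : t + 1 < n := hl t (List.mem_cons_self)
    have hl' : ∀ t' ∈ l, t' + 1 < n := fun t' ht' => hl t' (List.mem_cons_of_mem _ ht')
    have hsplit : ((t :: l).map fun t => Equiv.swap (t : Fin n) ((t + 1 : ℕ) : Fin n)) =
        Equiv.swap (t : Fin n) ((t + 1 : ℕ) : Fin n) ::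
          (l.map fun t => Equiv.swap (t : Fin n) ((t + 1 : ℕ) : Fin n)) := by simp
    rw [hsplit, List.prod_cons, List.map_cons, List.sum_cons]
    have := ih hl'
    have h := DD_mul_swap_le w hw ht ((l.map fun t => Equiv.swap (t : Fin n) ((t + 1 : ℕ) : Fin n)).prod)
    linarith

/-! ### Peeling a cycle at a suitable point -/

lemma peel_cost (w : ℕ → ℝ) (hw : ∀ t, t + 1 < n → 0 ≤ w t) (σ : Equiv.Perm (Fin n))
    (a : Fin n) (hab : σ a ≠ a)
    (hbtw : dd w (σ⁻¹ a) a = dd w (σ⁻¹ a) (σ a) + dd w (σ a) a) :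
    phiStar w a (σ a) + DD w (Equiv.swap a (σ a) * σ) ≤ DD w σ := by
  set b := σ a with hb
  set u := σ⁻¹ a with hu
  set σ' := Equiv.swap a b * σ with hσ'
  have hσu : σ u = a := σ.apply_symm_apply a
  have hua : u ≠ a := by
    intro hc
    rw [hc] at hσu
    exact hab hσu
  have hσ'u : σ' u = b := by
    simp [hσ', hσu, Equiv.swap_apply_left]
  have hσ'a : σ' a = a := by
    simp [hσ', ← hb, Equiv.swap_apply_right]
  have hdrop : DD w σ - DD w σ' = 2 * dd w a b := by
    have : DD w σ - DD w σ' = ∑ i, (dd w i (σ i) - dd w i (σ' i)) := by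
      rw [DD, DD, Finset.sum_sub_distrib]
    rw [this]
    rw [← Finset.sum_subset (Finset.subset_univ ({u, a} : Finset (Fin n)))]
    · rw [Finset.sum_pair hua, hσu, hσ'u, hσ'a, ← hb, dd_self]
      rw [hbtw, dd_symm w b a]
      ring
    · intro x _ hx
      simp only [Finset.mem_insert, Finset.mem_singleton, not_or] at hx
      have : σ x ≠ a := by
        intro hc; exact hx.1 (by rw [hu, ← hc]; simp)
      have h2 : σ x ≠ b := by
        intro hc; exact hx.2 (σ.injective (by rw [hc, hb]))
      have : σ' x = σ x := by
        simp [hσ', Equiv.swap_apply_of_ne_of_ne this h2]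
      rw [this, sub_self]
  have := phiStar_le_two_dd w hw a b
  linarith

lemma peel_support (σ : Equiv.Perm (Fin n)) (a : Fin n) (hab : σ a ≠ a)
    (hffa : σ (σ a) ≠ a) :
    (Equiv.swap a (σ a) * σ).support = σ.support.erase a := by
  ext y
  simp only [Equiv.Perm.mem_support, Finset.mem_erase, Equiv.Perm.mul_apply]
  constructor
  · intro hy
    by_cases hya : y = a
    · exfalso; apply hy; rw [hya, Equiv.swap_apply_right]
    refine ⟨hya, ?_⟩
    intro hfix
    apply hy
    have h1 : σ y ≠ a := by rw [hfix]; exact hya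
    have h2 : σ y ≠ σ a := by
      intro hc; exact hab (by rw [← σ.injective hc, hfix])
    rw [Equiv.swap_apply_of_ne_of_ne h1 h2, hfix]
  · rintro ⟨hya, hmove⟩
    intro hc
    by_cases h1 : σ y = a
    · rw [h1, Equiv.swap_apply_left] at hc
      apply hffa
      rw [hc, h1]
    · by_cases h2 : σ y = σ a
      · exact hya (σ.injective h2)
      · rw [Equiv.swap_apply_of_ne_of_ne h1 h2] at hc
        exact hmove hc

/-- The inductive statement: a cycle `σ` has a decomposition into
`#support − 1` transpositions of `phiStar`-cost at most `DD w σ`. -/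
def P (w : ℕ → ℝ) (σ : Equiv.Perm (Fin n)) : Prop :=
  ∃ l : List (Fin n × Fin n), (∀ p ∈ l, p.1 ≠ p.2) ∧ l.length + 1 = σ.support.card ∧
    (l.map fun p => Equiv.swap p.1 p.2).prod = σ ∧
    (l.map fun p => phiStar w p.1 p.2).sum ≤ DD w σ

lemma DD_inv (w : ℕ → ℝ) (σ : Equiv.Perm (Fin n)) : DD w σ⁻¹ = DD w σ := by
  have h := Equiv.sum_comp σ (fun i => dd w i (σ⁻¹ i))
  rw [DD, DD, ← h]
  apply Finset.sum_congr rfl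
  intro j _
  rw [show σ⁻¹ (σ j) = j from σ.symm_apply_apply j, dd_symm]

lemma key_stepA (w : ℕ → ℝ) (hw : ∀ t, t + 1 < n → 0 ≤ w t) (σ : Equiv.Perm (Fin n))
    (hc : σ.IsCycle) (a : Fin n) (ha : a ∈ σ.support)
    (hmax : ∀ x ∈ σ.support, x ≤ a) (hcond : σ⁻¹ a ≤ σ a)
    (IH : ∀ σ' : Equiv.Perm (Fin n), σ'.IsCycle →
      σ'.support.card < σ.support.card → P w σ') : P w σ := by
  have hab : σ a ≠ a := Equiv.Perm.mem_support.mp ha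
  have hbsup : σ a ∈ σ.support := Equiv.Perm.apply_mem_support.mpr ha
  have hble : σ a ≤ a := hmax _ hbsup
  have hbtw : dd w (σ⁻¹ a) a = dd w (σ⁻¹ a) (σ a) + dd w (σ a) a :=
    dd_between w hw hcond hble
  by_cases hffa : σ (σ a) = a
  · have hσswap : σ = Equiv.swap a (σ a) := hc.eq_swap_of_apply_apply_eq_self hab hffa
    refine ⟨[(a, σ a)], ?_, ?_, ?_, ?_⟩
    · intro p hp
      simp only [List.mem_singleton] at hp
      subst hp
      exact Ne.symm hab
    · simp only [List.length_singleton]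
      rw [hσswap, Equiv.Perm.card_support_swap (Ne.symm hab)]
    · rw [List.map_singleton, List.prod_singleton]; exact hσswap.symm
    · simp only [List.map_singleton, List.sum_singleton]
      have h1 : phiStar w a (σ a) ≤ 2 * dd w a (σ a) := phiStar_le_two_dd w hw a (σ a)
      have h2 : dd w a (σ a) + dd w (σ a) (σ (σ a)) ≤ DD w σ := by
        rw [DD]
        have := Finset.sum_le_sum_of_subset_of_nonneg
          (Finset.subset_univ ({a, σ a} : Finset (Fin n)))
          (fun i _ _ => dd_nonneg w i (σ i))
        rwa [Finset.sum_pair (Ne.symm hab)] at this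
      rw [hffa] at h2
      have h3 : dd w (σ a) a = dd w a (σ a) := dd_symm w _ _
      linarith
  · have hcyc' : (Equiv.swap a (σ a) * σ).IsCycle := hc.swap_mul hab hffa
    have hsupp' := peel_support σ a hab hffa
    have h2card : 2 ≤ σ.support.card := hc.two_le_card_support
    have hcard' : (Equiv.swap a (σ a) * σ).support.card + 1 = σ.support.card := by
      rw [hsupp', Finset.card_erase_of_mem ha]
      omega
    obtain ⟨l', hd', hlen', hprod', hcost'⟩ := IH _ hcyc' (by omega)
    refine ⟨(a, σ a) :: l', ?_, ?_, ?_, ?_⟩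
    · intro p hp
      rcases List.mem_cons.mp hp with h | h
      · subst h; exact Ne.symm hab
      · exact hd' p h
    · simp only [List.length_cons]
      omega
    · rw [List.map_cons, List.prod_cons, hprod', ← mul_assoc, Equiv.swap_mul_self, one_mul]
    · rw [List.map_cons, List.sum_cons]
      have := peel_cost w hw σ a hab hbtw
      linarith

lemma key_cycle (w : ℕ → ℝ) (hw : ∀ t, t + 1 < n → 0 ≤ w t) :
    ∀ k (σ : Equiv.Perm (Fin n)), σ.support.card = k → σ.IsCycle → P w σ := by
  intro k
  induction k using Nat.strong_induction_on with
  | _ k IH =>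
    intro σ hk hc
    have h2 : 2 ≤ σ.support.card := hc.two_le_card_support
    have hne : σ.support.Nonempty := Finset.card_pos.mp (by omega)
    set M := σ.support.max' hne with hM
    have hMsup : M ∈ σ.support := Finset.max'_mem _ _
    have hmax : ∀ x ∈ σ.support, x ≤ M := fun x hx => Finset.le_max' _ x hx
    have IH' : ∀ σ' : Equiv.Perm (Fin n), σ'.IsCycle →
        σ'.support.card < σ.support.card → P w σ' :=
      fun σ' hc' hlt => IH σ'.support.card (hk ▸ hlt) σ' rfl hc'
    rcases le_total (σ⁻¹ M) (σ M) with hcond | hcond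
    · exact key_stepA w hw σ hc M hMsup hmax hcond IH'
    · have hcinv : σ⁻¹.IsCycle := hc.inv
      have hsupinv : σ⁻¹.support = σ.support := Equiv.Perm.support_inv σ
      have hres : P w σ⁻¹ := by
        apply key_stepA w hw σ⁻¹ hcinv M (by rwa [hsupinv]) (by rw [hsupinv]; exact hmax)
        · rwa [inv_inv]
        · intro σ' hc' hlt
          rw [hsupinv] at hlt
          exact IH' σ' hc' hlt
      obtain ⟨l, hd, hlen, hprod, hcost⟩ := hres
      refine ⟨l.reverse, ?_, ?_, ?_, ?_⟩
      · intro p hp; exact hd p (List.mem_reverse.mp hp)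
      · rw [List.length_reverse, hsupinv] at *
        exact hlen
      · rw [List.map_reverse, List.prod_reverse_noncomm]
        have : (List.map (fun p => Equiv.swap p.1 p.2) l).map (fun x => x⁻¹) =
            List.map (fun p : Fin n × Fin n => Equiv.swap p.1 p.2) l := by
          rw [List.map_map]
          apply List.map_congr_left
          intro p _
          simp [Equiv.swap_inv]
        rw [this, hprod, inv_inv]
      · rw [List.map_reverse, List.sum_reverse]
        rw [DD_inv] at hcost
        exact hcost

/-! ### From cycles to general permutations -/

lemma DD_mul_disjoint (w : ℕ → ℝ) (σ τ : Equiv.Perm (Fin n))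
    (h : Equiv.Perm.Disjoint σ τ) : DD w (σ * τ) = DD w σ + DD w τ := by
  rw [DD, DD, DD, ← Finset.sum_add_distrib]
  apply Finset.sum_congr rfl
  intro i _
  rcases h i with hσ | hτ
  · by_cases hτi : τ i = i
    · simp [Equiv.Perm.mul_apply, hτi, hσ, dd_self]
    · have h2 : σ (τ i) = τ i := by
        rcases h (τ i) with h' | h'
        · exact h'
        · exact absurd (τ.injective h') hτi
      simp [Equiv.Perm.mul_apply, h2, hσ, dd_self]
  · simp [Equiv.Perm.mul_apply, hτ, dd_self]

lemma key_all (w : ℕ → ℝ) (hw : ∀ t, t + 1 < n → 0 ≤ w t) (π : Equiv.Perm (Fin n)) :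
    ∃ l : List (Fin n × Fin n), (∀ p ∈ l, p.1 ≠ p.2) ∧
      l.length + π.cycleFactorsFinset.card = π.support.card ∧
      (l.map fun p => Equiv.swap p.1 p.2).prod = π ∧
      (l.map fun p => phiStar w p.1 p.2).sum ≤ DD w π := by
  induction π using Equiv.Perm.cycle_induction_on with
  | base_one =>
    exact ⟨[], by simp, by simp [Equiv.Perm.cycleFactorsFinset_one], by simp,
      by simp [DD_one]⟩
  | base_cycles σ hσ =>
    obtain ⟨l, hd, hlen, hprod, hcost⟩ := key_cycle w hw σ.support.card σ rfl hσ
    exact ⟨l, hd, by rw [hσ.cycleFactorsFinset_eq_singleton]; simpa using hlen, hprod, hcost⟩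
  | induction_disjoint σ τ hdisj hσ ihσ ihτ =>
    obtain ⟨l1, hd1, hlen1, hprod1, hcost1⟩ := ihσ
    obtain ⟨l2, hd2, hlen2, hprod2, hcost2⟩ := ihτ
    refine ⟨l1 ++ l2, ?_, ?_, ?_, ?_⟩
    · intro p hp
      rcases List.mem_append.mp hp with h | h
      exacts [hd1 p h, hd2 p h]
    · have hFun : (σ * τ).cycleFactorsFinset = σ.cycleFactorsFinset ∪ τ.cycleFactorsFinset :=
        hdisj.cycleFactorsFinset_mul_eq_union
      have hFσ : σ.cycleFactorsFinset = {σ} := hσ.cycleFactorsFinset_eq_singleton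
      have hnotmem : σ ∉ τ.cycleFactorsFinset := by
        intro hmem
        have hle := Equiv.Perm.mem_cycleFactorsFinset_support_le hmem
        have hdsup := Equiv.Perm.disjoint_iff_disjoint_support.mp hdisj
        have h2 := hσ.two_le_card_support
        have hemp : σ.support = ∅ :=
          Finset.eq_empty_of_forall_notMem
            (fun x hx => (Finset.disjoint_left.mp hdsup hx) (hle hx))
        rw [hemp] at h2
        simp at h2
      have hcardF : (σ * τ).cycleFactorsFinset.card =
          σ.cycleFactorsFinset.card + τ.cycleFactorsFinset.card := by
        rw [hFun, Finset.card_union_of_disjoint]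
        rw [hFσ, Finset.disjoint_singleton_left]
        exact hnotmem
      have hcardS : (σ * τ).support.card = σ.support.card + τ.support.card :=
        hdisj.card_support_mul
      rw [List.length_append, hcardF, hcardS]
      omega
    · rw [List.map_append, List.prod_append, hprod1, hprod2]
    · rw [List.map_append, List.sum_append, DD_mul_disjoint w σ τ hdisj]
      linarith

/-! ### Nonemptiness of the adjacent-decomposition set -/

lemma exists_adj_decomp [NeZero n] (π : Equiv.Perm (Fin n)) :
    ∃ l : List ℕ, (∀ t ∈ l, t + 1 < n) ∧
      (l.map fun t => Equiv.swap (t : Fin n) ((t + 1 : ℕ) : Fin n)).prod = π := by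
  rcases n with _ | m
  · exact absurd rfl (NeZero.ne 0)
  · have hπ : π ∈ Submonoid.closure
        (Set.range fun i : Fin m => Equiv.swap i.castSucc i.succ) := by
      rw [Equiv.Perm.mclosure_swap_castSucc_succ m]
      trivial
    obtain ⟨L, hL, hLprod⟩ := Submonoid.exists_list_of_mem_closure hπ
    clear hπ
    subst hLprod
    induction L with
    | nil => exact ⟨[], by simp, by simp⟩
    | cons x L ih =>
      obtain ⟨l', hl', hl'prod⟩ := ih (fun y hy => hL y (List.mem_cons_of_mem _ hy))
      obtain ⟨i, hi⟩ := hL x (List.mem_cons_self)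
      refine ⟨(i : ℕ) :: l', ?_, ?_⟩
      · intro t ht
        rcases List.mem_cons.mp ht with h | h
        · subst h; omega
        · exact hl' t h
      · have hsplit : (((i : ℕ) :: l').map fun t =>
            Equiv.swap (t : Fin (m + 1)) ((t + 1 : ℕ) : Fin (m + 1))) =
            Equiv.swap ((i : ℕ) : Fin (m + 1)) (((i : ℕ) + 1 : ℕ) : Fin (m + 1)) ::
              (l'.map fun t => Equiv.swap (t : Fin (m + 1)) ((t + 1 : ℕ) : Fin (m + 1))) := by
          simp
        rw [hsplit, List.prod_cons, hl'prod, List.prod_cons]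
        congr 1
        rw [← hi]
        congr 1
        · ext
          simp [Fin.val_cast_of_lt (Nat.lt_succ_of_lt i.isLt)]
        · ext
          simp [Fin.val_cast_of_lt (Nat.succ_lt_succ i.isLt)]

/-! ### Main theorem -/

/-- with `L(π)` the minimum `φ*`-cost over decompositions of `π` with
exactly `n − c(π)` transpositions, one has `L(π) ≤ 2 M_e(π)`. -/
theorem stmt17 [NeZero n] (w : ℕ → ℝ) (hw : ∀ t, t + 1 < n → 0 ≤ w t)
    (π : Equiv.Perm (Fin n)) :
    Lcost (phiStar w) (n - cNum π) π ≤ 2 * Me w π := by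
  obtain ⟨l₀, hd0, hlen0, hprod0, hcost0⟩ := key_all w hw π
  have hsn : π.support.card ≤ n := by
    have := Finset.card_le_univ π.support
    simpa using this
  have hlen_eq : l₀.length = n - cNum π := by
    rw [cNum]
    omega
  -- the L set
  have hmem : ((l₀.map fun p => phiStar w p.1 p.2).sum) ∈
      {c : ℝ | ∃ l : List (Fin n × Fin n), (∀ p ∈ l, p.1 ≠ p.2) ∧ l.length = n - cNum π ∧
        (l.map fun p => Equiv.swap p.1 p.2).prod = π ∧
        (l.map fun p => phiStar w p.1 p.2).sum = c} :=
    ⟨l₀, hd0, hlen_eq, hprod0, rfl⟩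
  have hbdd : BddBelow {c : ℝ | ∃ l : List (Fin n × Fin n), (∀ p ∈ l, p.1 ≠ p.2) ∧
      l.length = n - cNum π ∧ (l.map fun p => Equiv.swap p.1 p.2).prod = π ∧
      (l.map fun p => phiStar w p.1 p.2).sum = c} := by
    refine ⟨0, ?_⟩
    rintro c ⟨l, _, _, _, rfl⟩
    apply List.sum_nonneg
    intro x hx
    obtain ⟨p, _, rfl⟩ := List.mem_map.mp hx
    exact phiStar_nonneg w hw p.1 p.2
  have hL : Lcost (phiStar w) (n - cNum π) π ≤ (l₀.map fun p => phiStar w p.1 p.2).sum := by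
    rw [Lcost]
    exact csInf_le hbdd hmem
  -- the Me set
  have hMe : DD w π / 2 ≤ Me w π := by
    rw [Me]
    apply le_csInf
    · obtain ⟨l, hl, hlprod⟩ := exists_adj_decomp π
      exact ⟨(l.map w).sum, l, hl, hlprod, rfl⟩
    · rintro b ⟨l, hl, hlprod, rfl⟩
      have := DD_le_adj w hw l hl
      rw [hlprod] at this
      linarith
  linarith
end

section
/- Let ψ be a nonnegative function on ordered pairs of distinct elements of {1,…,n} that is consistent with the cost function φ, i.e., ψ(a,b) + ψ(b,a) = φ(a,b) for all a ≠ b. Then for every cycle σ ∈ S_n there exists an h-decomposition of σ whose ψ-cost is at most M_φ(σ). -/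
variable {n : ℕ}

/-- Applying a list of h-transpositions `(c, a, b)` (each sending the current
predecessor of `a`, namely `c`, to `b`) in order to a function `f`. -/
def applyH (l : List (Fin n × Fin n × Fin n)) (f : Fin n → Fin n) : Fin n → Fin n :=
  l.foldl (fun g h => Function.update g h.1 h.2.2) f

/-! ### Auxiliary machinery -/

lemma applyH_nil (f : Fin n → Fin n) : applyH [] f = f := rfl

lemma applyH_cons (h : Fin n × Fin n × Fin n) (t : List (Fin n × Fin n × Fin n))
    (f : Fin n → Fin n) : applyH (h :: t) f = applyH t (Function.update f h.1 h.2.2) := rfl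

lemma applyH_append (L₁ L₂ : List (Fin n × Fin n × Fin n)) (f : Fin n → Fin n) :
    applyH (L₁ ++ L₂) f = applyH L₂ (applyH L₁ f) :=
  List.foldl_append

/-- All steps in `L` are applicable starting from `f`. -/
def Ok : List (Fin n × Fin n × Fin n) → (Fin n → Fin n) → Prop
  | [], _ => True
  | h :: t, f => f h.1 = h.2.1 ∧ Ok t (Function.update f h.1 h.2.2)

lemma Ok.append {L₁ L₂ : List (Fin n × Fin n × Fin n)} {f : Fin n → Fin n}
    (h₁ : Ok L₁ f) (h₂ : Ok L₂ (applyH L₁ f)) : Ok (L₁ ++ L₂) f := by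
  induction L₁ generalizing f with
  | nil => exact h₂
  | cons h t ih =>
    exact ⟨h₁.1, ih h₁.2 h₂⟩

lemma Ok.take_spec {L : List (Fin n × Fin n × Fin n)} {f : Fin n → Fin n} (hL : Ok L f) :
    ∀ i : ℕ, ∀ hi : i < L.length,
      applyH (L.take i) f (L.get ⟨i, hi⟩).1 = (L.get ⟨i, hi⟩).2.1 := by
  induction L generalizing f with
  | nil => intro i hi; simp at hi
  | cons h t ih =>
    intro i hi
    cases i with
    | zero => simpa [applyH_nil] using hL.1
    | succ i =>
      simpa [applyH_cons] using ih hL.2 i (by simpa using hi)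

/-- Convert a transposition decomposition into an h-decomposition. -/
def conv : List (Fin n × Fin n) → List (Fin n × Fin n × Fin n)
  | [] => []
  | p :: t =>
    conv t ++ [(((t.map fun q => Equiv.swap q.1 q.2).prod)⁻¹ p.1, p.1, p.2),
               (((t.map fun q => Equiv.swap q.1 q.2).prod)⁻¹ p.2, p.2, p.1)]

lemma conv_mem (l : List (Fin n × Fin n)) (hl : ∀ p ∈ l, p.1 ≠ p.2) :
    ∀ h ∈ conv l, h.2.1 ≠ h.2.2 := by
  induction l with
  | nil => intro h hh; simp [conv] at hh
  | cons p t ih =>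
    intro h hh
    simp only [conv, List.mem_append, List.mem_cons, List.mem_singleton] at hh
    rcases hh with hh | hh | hh | hh
    · exact ih (fun q hq => hl q (List.mem_cons_of_mem _ hq)) h hh
    · subst hh; exact hl p (List.mem_cons_self)
    · subst hh; exact (hl p (List.mem_cons_self)).symm
    · simp at hh

lemma update_update_swap (Q : Equiv.Perm (Fin n)) (a b : Fin n) (hab : a ≠ b) :
    Function.update (Function.update (⇑Q) (Q⁻¹ a) b) (Q⁻¹ b) a
      = ⇑(Equiv.swap a b * Q) := by
  funext x
  have hne : Q⁻¹ b ≠ Q⁻¹ a := fun h => hab.symm (Q⁻¹.injective h)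
  by_cases hx1 : x = Q⁻¹ b
  · subst hx1
    simp [Function.update_self, Equiv.Perm.mul_apply, Equiv.swap_apply_right]
  · by_cases hx2 : x = Q⁻¹ a
    · subst hx2
      rw [Function.update_of_ne hx1]
      simp [Function.update_of_ne hx1, Function.update_self,
        Equiv.Perm.mul_apply, Equiv.swap_apply_left]
    · have h1 : Q x ≠ a := fun h => hx2 (by simp [← h])
      have h2 : Q x ≠ b := fun h => hx1 (by simp [← h])
      rw [Function.update_of_ne hx1, Function.update_of_ne hx2]
      simp [Function.update_of_ne hx1, Function.update_of_ne hx2,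
        Equiv.Perm.mul_apply, Equiv.swap_apply_of_ne_of_ne h1 h2]

lemma conv_spec (l : List (Fin n × Fin n)) (hl : ∀ p ∈ l, p.1 ≠ p.2) :
    Ok (conv l) id ∧
      applyH (conv l) id = ⇑((l.map fun p => Equiv.swap p.1 p.2).prod) := by
  induction l with
  | nil => constructor
           · trivial
           · simp [conv, applyH_nil]
  | cons p t ih =>
    obtain ⟨hok, happ⟩ := ih (fun q hq => hl q (List.mem_cons_of_mem _ hq))
    have hab : p.1 ≠ p.2 := hl p (List.mem_cons_self)
    set Q : Equiv.Perm (Fin n) := (t.map fun q => Equiv.swap q.1 q.2).prod with hQ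
    have hne : Q⁻¹ p.2 ≠ Q⁻¹ p.1 := fun h => hab.symm (Q⁻¹.injective h)
    constructor
    · apply hok.append
      rw [happ]
      refine ⟨by simp [hQ], ?_, trivial⟩
      rw [Function.update_of_ne hne]
      simp
    · rw [conv, applyH_append, happ, applyH_cons, applyH_cons, applyH_nil]
      have h1 : Function.update (⇑Q) (Q⁻¹ p.1) p.2 (Q⁻¹ p.2)  = p.2 := by
        rw [Function.update_of_ne hne]; simp
      calc Function.update (Function.update (⇑Q) (Q⁻¹ p.1) p.2) (Q⁻¹ p.2) p.1
          = ⇑(Equiv.swap p.1 p.2 * Q) := update_update_swap Q p.1 p.2 hab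
        _ = ⇑(((p :: t).map fun q => Equiv.swap q.1 q.2).prod) := by
            simp [List.map_cons, List.prod_cons, hQ]

lemma conv_cost (φ ψ : Fin n → Fin n → ℝ)
    (hcons : ∀ a b : Fin n, a ≠ b → ψ a b + ψ b a = φ a b)
    (l : List (Fin n × Fin n)) (hl : ∀ p ∈ l, p.1 ≠ p.2) :
    ((conv l).map fun h => ψ h.2.1 h.2.2).sum = (l.map fun p => φ p.1 p.2).sum := by
  induction l with
  | nil => simp [conv]
  | cons p t ih =>
    have hab : p.1 ≠ p.2 := hl p (List.mem_cons_self)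
    rw [conv, List.map_append, List.sum_append,
      ih (fun q hq => hl q (List.mem_cons_of_mem _ hq))]
    simp only [List.map_cons, List.map_nil, List.sum_cons, List.sum_nil, List.map]
    rw [← hcons p.1 p.2 hab]
    ring

lemma beq_inst_eq : (@instBEqOfDecidableEq (Fin n × Fin n) instDecidableEqProd) = instBEqProd := by
  apply beq_ext; intro x y
  show decide (x = y) = (x == y)
  by_cases h : x = y
  · rw [decide_eq_true h, beq_iff_eq.2 h]
  · rw [decide_eq_false h, beq_false_of_ne h]

/-- The cost set has a lower bound which is attained. -/
lemma exists_min_cost (φ : Fin n → Fin n → ℝ)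
    (hφnn : ∀ a b : Fin n, a ≠ b → 0 ≤ φ a b)
    (S : Set ℝ)
    (hS : ∀ c ∈ S, ∃ l : List (Fin n × Fin n), (∀ p ∈ l, p.1 ≠ p.2) ∧
      (l.map fun p => φ p.1 p.2).sum = c)
    (hne : S.Nonempty) : ∃ c ∈ S, ∀ c' ∈ S, c ≤ c' := by
  classical
  obtain ⟨B, hB⟩ := hne
  set φ' : Fin n × Fin n → ℝ := fun p => if p.1 = p.2 then 0 else φ p.1 p.2 with hφ'
  have hφ'nn : ∀ p, 0 ≤ φ' p := by
    intro p
    by_cases h : p.1 = p.2 <;> simp [hφ', h]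
    exact hφnn _ _ h
  set g : ((Fin n × Fin n) → ℕ) → ℝ := fun m => ∑ p : Fin n × Fin n, (m p : ℝ) * φ' p with hg
  -- every cost is a value of `g` at some `m` supported on positive-cost pairs
  have key : ∀ c ∈ S, ∃ m : (Fin n × Fin n) → ℕ,
      g m = c ∧ ∀ p, φ' p ≠ 0 → (m p : ℝ) * φ' p ≤ c := by
    intro c hc
    obtain ⟨l, hld, hlc⟩ := hS c hc
    have hmap : (l.map fun p => φ p.1 p.2) = l.map φ' := by
      refine List.map_congr_left fun p hp => ?_
      simp [hφ', hld p hp]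
    have hcount : c = ∑ p : Fin n × Fin n, (l.count p : ℝ) * φ' p := by
      rw [← hlc, hmap, Finset.sum_list_map_count]
      rw [beq_inst_eq]
      rw [Finset.sum_subset (Finset.subset_univ l.toFinset)]
      · exact Finset.sum_congr rfl fun p _ => nsmul_eq_mul _ _
      · intro p _ hp
        rw [List.count_eq_zero_of_not_mem (fun h => hp (List.mem_toFinset.2 h)), zero_smul]
    refine ⟨fun p => if φ' p = 0 then 0 else l.count p, ?_, ?_⟩
    · rw [hcount, hg]
      refine Finset.sum_congr rfl fun p _ => ?_
      by_cases h : φ' p = 0 <;> simp [h]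
    · intro p hp
      have hterm : ∀ q : Fin n × Fin n, 0 ≤ (l.count q : ℝ) * φ' q :=
        fun q => mul_nonneg (Nat.cast_nonneg _) (hφ'nn q)
      have := Finset.single_le_sum (f := fun q => (l.count q : ℝ) * φ' q)
        (fun q _ => hterm q) (Finset.mem_univ p)
      rw [← hcount] at this
      simpa [hp] using this
  -- values with cost ≤ B come from a finite set of multiplicity functions
  set K : (Fin n × Fin n) → ℕ := fun p => ⌊B / φ' p⌋₊ with hK
  have hMfin : (Set.univ.pi fun p : Fin n × Fin n => Set.Iic (K p)).Finite :=
    Set.Finite.pi fun p => Set.finite_Iic (K p)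
  have hsub : S ∩ Set.Iic B ⊆ g '' (Set.univ.pi fun p => Set.Iic (K p)) := by
    rintro c ⟨hcS, hcB⟩
    obtain ⟨m, hm, hmb⟩ := key c hcS
    refine ⟨fun p => if φ' p = 0 then 0 else m p, ?_, ?_⟩
    · intro p _
      by_cases h : φ' p = 0
      · simp [h]
      · have hpos : 0 < φ' p := lt_of_le_of_ne (hφ'nn p) (Ne.symm h)
        have h1 : (m p : ℝ) * φ' p ≤ B := le_trans (hmb p h) hcB
        have h2 : (m p : ℝ) ≤ B / φ' p := (le_div_iff₀ hpos).2 h1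
        simpa [h, hK] using Nat.le_floor h2
    · rw [← hm, hg]
      refine Finset.sum_congr rfl fun p _ => ?_
      by_cases h : φ' p = 0 <;> simp [h]
  have hfin : (S ∩ Set.Iic B).Finite := (hMfin.image g).subset hsub
  have hne' : (S ∩ Set.Iic B).Nonempty := ⟨B, hB, le_refl B⟩
  obtain ⟨c, ⟨hcS, hcB⟩, hcmin⟩ := Set.exists_min_image _ id hfin hne'
  refine ⟨c, hcS, fun c' hc' => ?_⟩
  by_cases h : c' ≤ B
  · exact hcmin c' ⟨hc', h⟩
  · exact le_trans (hcmin B ⟨hB, le_refl B⟩) (le_of_lt (lt_of_not_ge h))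

lemma exists_pairs (l : List (Equiv.Perm (Fin n))) (h : ∀ g ∈ l, g.IsSwap) :
    ∃ pl : List (Fin n × Fin n), (∀ p ∈ pl, p.1 ≠ p.2) ∧
      (pl.map fun p => Equiv.swap p.1 p.2) = l := by
  induction l with
  | nil => exact ⟨[], by simp, rfl⟩
  | cons g t ih =>
    obtain ⟨pl, hpl, hmap⟩ := ih fun g' hg' => h g' (List.mem_cons_of_mem _ hg')
    obtain ⟨a, b, hab, hg⟩ := h g (List.mem_cons_self)
    refine ⟨(a, b) :: pl, ?_, ?_⟩
    · intro p hp
      rcases List.mem_cons.1 hp with hp | hp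
      · subst hp; exact hab
      · exact hpl p hp
    · simp [hmap, hg.symm]

/-- if `ψ` is nonnegative and consistent with `φ`
(`ψ a b + ψ b a = φ a b` for `a ≠ b`), then for every cycle `σ` there is an
h-decomposition of `σ` (a list of h-transpositions, each applicable at its step,
transforming the identity function into `σ`) whose `ψ`-cost is at most `M_φ(σ)`. -/
theorem stmt19 (φ ψ : Fin n → Fin n → ℝ)
    (hφnn : ∀ a b : Fin n, a ≠ b → 0 ≤ φ a b)
    (hφsym : ∀ a b : Fin n, φ a b = φ b a)
    (hψnn : ∀ a b : Fin n, a ≠ b → 0 ≤ ψ a b)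
    (hcons : ∀ a b : Fin n, a ≠ b → ψ a b + ψ b a = φ a b)
    (σ : Equiv.Perm (Fin n)) (hσ : σ.IsCycle) :
    ∃ l : List (Fin n × Fin n × Fin n),
      (∀ h ∈ l, h.2.1 ≠ h.2.2) ∧
      (∀ i : ℕ, ∀ hi : i < l.length,
        applyH (l.take i) id (l.get ⟨i, hi⟩).1 = (l.get ⟨i, hi⟩).2.1) ∧
      applyH l id = ⇑σ ∧
      (l.map fun h => ψ h.2.1 h.2.2).sum ≤ Mcost φ σ := by
  classical
  set S : Set ℝ := {c : ℝ | ∃ l : List (Fin n × Fin n), (∀ p ∈ l, p.1 ≠ p.2) ∧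
    (l.map fun p => Equiv.swap p.1 p.2).prod = σ ∧
    (l.map fun p => φ p.1 p.2).sum = c} with hSdef
  -- S is nonempty
  obtain ⟨l₁, hprod₁, hswap₁⟩ := (Equiv.Perm.truncSwapFactors σ).out
  obtain ⟨pl₁, hpl₁, hmap₁⟩ := exists_pairs l₁ hswap₁
  have hne : S.Nonempty :=
    ⟨(pl₁.map fun p => φ p.1 p.2).sum, pl₁, hpl₁, by rw [hmap₁, hprod₁], rfl⟩
  -- get a minimum of S
  obtain ⟨c, hcS, hcmin⟩ := exists_min_cost φ hφnn S
    (fun c hc => by obtain ⟨l, hl1, _, hl3⟩ := hc; exact ⟨l, hl1, hl3⟩) hne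
  obtain ⟨l₀, hl₀d, hl₀p, hl₀c⟩ := hcS
  obtain ⟨hok, happ⟩ := conv_spec l₀ hl₀d
  refine ⟨conv l₀, conv_mem l₀ hl₀d, hok.take_spec, ?_, ?_⟩
  · rw [happ, hl₀p]
  · rw [conv_cost φ ψ hcons l₀ hl₀d, hl₀c]
    exact le_csInf hne hcmin
end
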